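/- arXiv:2603.25913 — 7 statements merged into one kernel-verified Lean document; each statement's English description precedes it below -/
import Mathlib

section
/- For every nonnegative integer m and real numbers x and y, one has x^(2m) = Σ_{ℓ=0}^{m} (-1)^ℓ · ⟨y+x⟩_ℓ · ⟨y−x⟩_ℓ · σ_{m,ℓ}(y), where ⟨t⟩_ℓ denotes the falling factorial and σ_{m,ℓ}(y) is the complete homogeneous symmetric polynomial of degree m−ℓ in the quantities (y−j)^2 for j = 0, 1, …, ℓ. -/
open Finset

noncomputable def hpoly (y : ℝ) : ℕ → ℕ → ℝ
  | 0, _ => 1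
  | d+1, 0 => y^2 * hpoly y d 0
  | d+1, ℓ+1 => hpoly y (d+1) ℓ + (y - ((ℓ:ℝ)+1))^2 * hpoly y d (ℓ+1)
  termination_by d ℓ => (d, ℓ)

lemma monotone_snoc_last {d ℓ : ℕ} (g : Fin d → Fin (ℓ+2)) (hg : Monotone g) :
    Monotone (Fin.snoc g (Fin.last (ℓ+1)) : Fin (d+1) → Fin (ℓ+2)) := by
  intro a b hab
  induction b using Fin.lastCases with
  | last => rw [Fin.snoc_last]; exact Fin.le_last _
  | cast j =>
    have ha : a ≠ Fin.last d := by
      intro h; subst h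
      exact absurd (lt_of_le_of_lt hab (Fin.castSucc_lt_last j)) (lt_irrefl _)
    rw [← Fin.castSucc_castPred a ha, Fin.snoc_castSucc, Fin.snoc_castSucc]
    exact hg (by rw [← Fin.castSucc_le_castSucc_iff, Fin.castSucc_castPred]; exact hab)

lemma S_eq_hpoly (y : ℝ) : ∀ d ℓ : ℕ,
    (∑ k ∈ Finset.univ.filter (fun k : Fin d → Fin (ℓ + 1) => Monotone k),
      ∏ i, (y - (k i : ℝ)) ^ 2) = hpoly y d ℓ := by
  intro d
  induction d with
  | zero =>
    intro ℓ
    rw [hpoly]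
    rw [Finset.sum_eq_single (fun i : Fin 0 => (0 : Fin (ℓ+1)))]
    · simp
    · intro b hb hne; exact absurd (Subsingleton.elim b _) hne
    · intro h
      exact absurd (Finset.mem_filter.2 ⟨Finset.mem_univ _, fun a b _ => a.elim0⟩) h
  | succ d ihd =>
    have h1 : ∀ e : ℕ, (∑ k ∈ Finset.univ.filter (fun k : Fin e → Fin 1 => Monotone k),
        ∏ i, (y - (k i : ℝ)) ^ 2) = (y^2)^e := by
      intro e
      have hf : (Finset.univ.filter (fun k : Fin e → Fin 1 => Monotone k)) = Finset.univ :=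
        Finset.filter_true_of_mem (fun k _ => fun a b _ => le_of_eq (Subsingleton.elim _ _))
      rw [hf]
      rw [Finset.sum_eq_single (fun _ : Fin e => (0 : Fin 1))]
      · simp
      · intro b hb hne; exact absurd (Subsingleton.elim b _) hne
      · intro h; exact absurd (Finset.mem_univ _) h
    intro ℓ
    induction ℓ with
    | zero =>
      rw [hpoly, ← ihd 0, h1 (d+1), h1 d, pow_succ]
      ring
    | succ ℓ ihl =>
      rw [hpoly, ← ihd (ℓ+1), ← ihl]
      rw [← Finset.sum_filter_add_sum_filter_not
        (Finset.univ.filter (fun k : Fin (d+1) → Fin (ℓ+2) => Monotone k))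
        (fun k => k (Fin.last d) = Fin.last (ℓ+1))]
      rw [add_comm]
      congr 1
      · -- k last ≠ last ↦ monotone functions into Fin (ℓ+1)
        have hne : ∀ (k : Fin (d+1) → Fin (ℓ+2)),
            k ∈ (Finset.univ.filter (fun k : Fin (d+1) → Fin (ℓ+2) => Monotone k)).filter
              (fun k => ¬ k (Fin.last d) = Fin.last (ℓ+1)) →
            ∀ j, k j ≠ Fin.last (ℓ+1) := by
          intro k hk j h
          have hm := Finset.mem_filter.1 hk
          have hmono : Monotone k := (Finset.mem_filter.1 hm.1).2
          have h2 : Fin.last (ℓ+1) ≤ k (Fin.last d) := h ▸ hmono (Fin.le_last j)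
          exact hm.2 (le_antisymm (Fin.le_last _) h2)
        refine Finset.sum_bij'
          (i := fun k hk => fun j : Fin (d+1) => (k j).castPred (hne k hk j))
          (j := fun g _ => fun j => Fin.castSucc (g j)) ?_ ?_ ?_ ?_ ?_
        · intro k hk
          have hmono : Monotone k := (Finset.mem_filter.1 (Finset.mem_filter.1 hk).1).2
          refine Finset.mem_filter.2 ⟨Finset.mem_univ _, fun a b hab => ?_⟩
          rw [Fin.castPred_le_castPred_iff]
          exact hmono hab
        · intro g hg
          have hmono : Monotone g := (Finset.mem_filter.1 hg).2
          refine Finset.mem_filter.2 ⟨Finset.mem_filter.2 ⟨Finset.mem_univ _,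
            fun a b hab => Fin.castSucc_le_castSucc_iff.2 (hmono hab)⟩,
            fun h => Fin.ne_of_lt (Fin.castSucc_lt_last _) h⟩
        · intro k hk; funext j; simp [Fin.castSucc_castPred]
        · intro g hg; funext j; simp [Fin.castPred_castSucc]
        · intro k hk
          apply Finset.prod_congr rfl
          intro j _
          rw [Fin.coe_castPred]
      · -- k last = last ↦ (y-(ℓ+1))^2 * sum over monotone Fin d → Fin (ℓ+2)
        rw [Finset.mul_sum]
        refine Finset.sum_bij'
          (i := fun k _ => Fin.init k)
          (j := fun g _ => Fin.snoc g (Fin.last (ℓ+1))) ?_ ?_ ?_ ?_ ?_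
        · intro k hk
          have hmono : Monotone k := (Finset.mem_filter.1 (Finset.mem_filter.1 hk).1).2
          exact Finset.mem_filter.2 ⟨Finset.mem_univ _,
            fun a b hab => hmono (Fin.castSucc_le_castSucc_iff.2 hab)⟩
        · intro g hg
          have hmono : Monotone g := (Finset.mem_filter.1 hg).2
          refine Finset.mem_filter.2 ⟨Finset.mem_filter.2 ⟨Finset.mem_univ _,
            monotone_snoc_last g hmono⟩, Fin.snoc_last _ _⟩
        · intro k hk
          have hlast : k (Fin.last d) = Fin.last (ℓ+1) := (Finset.mem_filter.1 hk).2
          show Fin.snoc (Fin.init k) (Fin.last (ℓ+1)) = k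
          rw [← hlast, Fin.snoc_init_self]
        · intro g hg; exact Fin.init_snoc _ _
        · intro k hk
          have hlast : k (Fin.last d) = Fin.last (ℓ+1) := (Finset.mem_filter.1 hk).2
          rw [Fin.prod_univ_castSucc (f := fun i => (y - (k i : ℝ))^2)]
          rw [hlast, mul_comm]
          congr 1
          · simp [Fin.last]

/-- Falling factorial `⟨x⟩_n = x(x-1)⋯(x-n+1)`. -/
noncomputable def ffact (x : ℝ) : ℕ → ℝ
  | 0 => 1
  | n + 1 => ffact x n * (x - n)

/-- `σ_{m,ℓ}(y)`: the complete homogeneous symmetric polynomial of degree `m - ℓ`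
evaluated at `(y-0)^2, (y-1)^2, …, (y-ℓ)^2`, i.e. the sum over weakly increasing
sequences `0 ≤ k_1 ≤ ⋯ ≤ k_{m-ℓ} ≤ ℓ` of `∏ i, (y - k_i)^2`. -/
noncomputable def csigma (m ℓ : ℕ) (y : ℝ) : ℝ :=
  ∑ k ∈ Finset.univ.filter (fun k : Fin (m - ℓ) → Fin (ℓ + 1) => Monotone k),
    ∏ i, (y - (k i : ℝ)) ^ 2

lemma csigma_eq (m ℓ : ℕ) (y : ℝ) : csigma m ℓ y = hpoly y (m - ℓ) ℓ :=
  S_eq_hpoly y (m - ℓ) ℓ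

noncomputable def Acoef (x y : ℝ) (ℓ : ℕ) : ℝ :=
  (-1 : ℝ) ^ ℓ * ffact (y + x) ℓ * ffact (y - x) ℓ

lemma Acoef_succ (x y : ℝ) (ℓ : ℕ) :
    Acoef x y (ℓ+1) = Acoef x y ℓ * (x^2 - (y - (ℓ:ℝ))^2) := by
  simp only [Acoef, ffact]
  ring

lemma main_aux (x y : ℝ) : ∀ m : ℕ,
    (∑ ℓ ∈ Finset.range (m + 1), Acoef x y ℓ * hpoly y (m - ℓ) ℓ) = x ^ (2 * m) := by
  intro m
  induction m with
  | zero => simp [Acoef, ffact, hpoly]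
  | succ m ih =>
    set B : ℕ → ℝ := fun ℓ => match ℓ with
      | 0 => 0
      | ℓ+1 => Acoef x y (ℓ+1) * hpoly y (m - ℓ) ℓ with hB
    have hB0 : B 0 = 0 := rfl
    have hBs : ∀ ℓ : ℕ, B (ℓ+1) = Acoef x y (ℓ+1) * hpoly y (m - ℓ) ℓ := fun _ => rfl
    have key : ∀ ℓ ∈ Finset.range (m+1),
        Acoef x y ℓ * hpoly y (m + 1 - ℓ) ℓ =
          (B ℓ - B (ℓ+1)) + x^2 * (Acoef x y ℓ * hpoly y (m - ℓ) ℓ) := by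
      intro ℓ hℓ
      have hle : ℓ ≤ m := Nat.lt_succ_iff.1 (Finset.mem_range.1 hℓ)
      match ℓ with
      | 0 =>
        have : m + 1 - 0 = (m - 0) + 1 := by omega
        rw [this]
        show Acoef x y 0 * hpoly y ((m-0)+1) 0 = _
        rw [hpoly]
        rw [hB0, hBs]
        rw [Acoef_succ]
        push_cast
        ring
      | ℓ+1 =>
        obtain ⟨d, hd1, hd2⟩ : ∃ d, m - (ℓ+1) = d ∧ m + 1 - (ℓ+1) = d + 1 := ⟨m - (ℓ+1), rfl, by omega⟩
        have hd3 : m - ℓ = d + 1 := by omega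
        rw [hd1, hd2, hpoly]
        rw [hBs ℓ, hBs (ℓ+1), hd1, hd3, Acoef_succ x y (ℓ+1)]
        push_cast
        ring
    rw [Finset.sum_range_succ, Finset.sum_congr rfl key]
    have hB1 : B (m+1) = Acoef x y (m+1) := by
      rw [hBs, Nat.sub_self, hpoly, mul_one]
    have htel : ∑ ℓ ∈ Finset.range (m+1), (B ℓ - B (ℓ+1)) = B 0 - B (m+1) := by
      have := Finset.sum_range_sub' B (m+1)
      simpa using this
    rw [Finset.sum_add_distrib, htel, ← Finset.mul_sum, ih]
    have : m + 1 - (m+1) = 0 := by omega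
    rw [this]
    show B 0 - B (m+1) + x^2 * x^(2*m) + Acoef x y (m+1) * hpoly y 0 (m+1) = x ^ (2*(m+1))
    rw [hB1, hpoly, hB0]
    ring

theorem sum_formula_lemma1 (m : ℕ) (x y : ℝ) :
    x ^ (2 * m) =
      ∑ ℓ ∈ Finset.range (m + 1),
        (-1 : ℝ) ^ ℓ * ffact (y + x) ℓ * ffact (y - x) ℓ * csigma m ℓ y := by
  rw [← main_aux x y m]
  apply Finset.sum_congr rfl
  intro ℓ _
  rw [csigma_eq]
  rfl
end

section
/- Let m, ℓ be nonnegative integers with ℓ ≤ m and let y be a real number such that 2y ∉ {0, 1, …, 2ℓ}. Then σ_{m,ℓ}(y) = (2(−1)^ℓ / ⟨2y⟩_{1+2ℓ}) · Σ_{i=0}^{ℓ} C(2y, i) · C(2ℓ−2y, ℓ−i) · (y−i)^{1+2m}, where C(t, i) = ⟨t⟩_i / i! denotes the generalized binomial coefficient. -/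
open Finset

/-- Generalized binomial coefficient `C(t, i) = ⟨t⟩_i / i!`. -/
noncomputable def gbinom (t : ℝ) (i : ℕ) : ℝ := ffact t i / (Nat.factorial i)

open Finset

noncomputable def Afun (x : ℕ → ℝ) (s : Finset ℕ) (p : ℕ) : ℝ :=
  ∑ j ∈ s, x j ^ p / ∏ k ∈ s.erase j, (x j - x k)

lemma Afun_rec1 (x : ℕ → ℝ) (s : Finset ℕ) (p : ℕ) (b : ℕ) (hb : b ∈ s)
    (hd : ∀ j ∈ s, ∀ k ∈ s, j ≠ k → x j ≠ x k) :
    Afun x s (p+1) = Afun x (s.erase b) p + x b * Afun x s p := by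
  have key : Afun x s (p+1) - x b * Afun x s p = Afun x (s.erase b) p := by
    unfold Afun
    rw [mul_sum, ← sum_sub_distrib]
    rw [← Finset.add_sum_erase _ _ hb]
    have hzero : x b ^ (p+1) / ∏ k ∈ s.erase b, (x b - x k) -
        x b * (x b ^ p / ∏ k ∈ s.erase b, (x b - x k)) = 0 := by
      rw [pow_succ]; ring
    rw [hzero, zero_add]
    apply Finset.sum_congr rfl
    intro j hj
    have hjs : j ∈ s := Finset.mem_of_mem_erase hj
    have hjb : j ≠ b := Finset.ne_of_mem_erase hj
    have hbmem : b ∈ s.erase j := Finset.mem_erase.2 ⟨Ne.symm hjb, hb⟩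
    have hprod : ∏ k ∈ s.erase j, (x j - x k) =
        (x j - x b) * ∏ k ∈ (s.erase b).erase j, (x j - x k) := by
      rw [← Finset.mul_prod_erase _ _ hbmem, Finset.erase_right_comm]
    have hne : x j - x b ≠ 0 := sub_ne_zero.2 (hd j hjs b hb hjb)
    have hD : ∏ k ∈ (s.erase b).erase j, (x j - x k) ≠ 0 := by
      apply Finset.prod_ne_zero_iff.2
      intro k hk
      have hk1 := Finset.mem_erase.1 hk
      exact sub_ne_zero.2 (hd j hjs k (Finset.mem_of_mem_erase hk1.2) (Ne.symm hk1.1))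
    rw [hprod, pow_succ]
    field_simp
  linarith [key]


lemma prod_erase_decomp (x : ℕ → ℝ) (s : Finset ℕ) (j c : ℕ) (hc : c ∈ s) (hcj : c ≠ j) :
    ∏ k ∈ s.erase j, (x j - x k) = (x j - x c) * ∏ k ∈ (s.erase c).erase j, (x j - x k) := by
  rw [← Finset.mul_prod_erase _ _ (Finset.mem_erase.2 ⟨hcj, hc⟩), Finset.erase_right_comm]

lemma prod_sub_ne_zero (x : ℕ → ℝ) (s u : Finset ℕ) (j : ℕ) (hj : j ∈ s)
    (hu : u ⊆ s.erase j) (hd : ∀ a ∈ s, ∀ b ∈ s, a ≠ b → x a ≠ x b) :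
    ∏ k ∈ u, (x j - x k) ≠ 0 := by
  apply Finset.prod_ne_zero_iff.2
  intro k hk
  exact sub_ne_zero.2
    (hd j hj k (Finset.mem_of_mem_erase (hu hk)) (Ne.symm (Finset.ne_of_mem_erase (hu hk))))

lemma Afun_singleton (x : ℕ → ℝ) (a : ℕ) (p : ℕ) : Afun x {a} p = x a ^ p := by
  simp [Afun]

lemma Afun_rec2 (x : ℕ → ℝ) (s : Finset ℕ) (p : ℕ) (a b : ℕ) (ha : a ∈ s) (hb : b ∈ s)
    (hab : a ≠ b) (hd : ∀ j ∈ s, ∀ k ∈ s, j ≠ k → x j ≠ x k) :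
    (x b - x a) * Afun x s p = Afun x (s.erase a) p - Afun x (s.erase b) p := by
  have hba : b ∈ s.erase a := Finset.mem_erase.2 ⟨Ne.symm hab, hb⟩
  have hab' : a ∈ s.erase b := Finset.mem_erase.2 ⟨hab, ha⟩
  have htb : (s.erase a).erase b = (s.erase b).erase a := Finset.erase_right_comm
  unfold Afun
  rw [mul_sum, ← Finset.add_sum_erase _ _ ha, ← Finset.add_sum_erase _ _ hba,
      ← Finset.add_sum_erase _ (fun j => x j ^ p / ∏ k ∈ (s.erase a).erase j, (x j - x k)) hba,
      ← Finset.add_sum_erase _ (fun j => x j ^ p / ∏ k ∈ (s.erase b).erase j, (x j - x k)) hab',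
      ← htb]
  have hterm : ∀ j ∈ (s.erase a).erase b,
      (x b - x a) * (x j ^ p / ∏ k ∈ s.erase j, (x j - x k)) =
        x j ^ p / ∏ k ∈ (s.erase a).erase j, (x j - x k) -
          x j ^ p / ∏ k ∈ (s.erase b).erase j, (x j - x k) := by
    intro j hj
    have hjb : j ≠ b := Finset.ne_of_mem_erase hj
    have hja : j ≠ a := Finset.ne_of_mem_erase (Finset.mem_of_mem_erase hj)
    have hjs : j ∈ s := Finset.mem_of_mem_erase (Finset.mem_of_mem_erase hj)
    have P0 : ∏ k ∈ s.erase j, (x j - x k) =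
        (x j - x a) * ∏ k ∈ (s.erase a).erase j, (x j - x k) :=
      prod_erase_decomp x s j a ha (Ne.symm hja)
    have P1 : ∏ k ∈ (s.erase a).erase j, (x j - x k) =
        (x j - x b) * ∏ k ∈ ((s.erase a).erase b).erase j, (x j - x k) :=
      prod_erase_decomp x (s.erase a) j b hba (Ne.symm hjb)
    have P2 : ∏ k ∈ (s.erase b).erase j, (x j - x k) =
        (x j - x a) * ∏ k ∈ ((s.erase b).erase a).erase j, (x j - x k) :=
      prod_erase_decomp x (s.erase b) j a hab' (Ne.symm hja)
    rw [P0, P1, P2, ← htb]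
    have hna : x j - x a ≠ 0 := sub_ne_zero.2 (hd j hjs a ha hja)
    have hnb : x j - x b ≠ 0 := sub_ne_zero.2 (hd j hjs b hb hjb)
    have hU : ∏ k ∈ ((s.erase a).erase b).erase j, (x j - x k) ≠ 0 := by
      apply prod_sub_ne_zero x s _ j hjs _ hd
      intro k hk
      exact Finset.mem_erase.2 ⟨Finset.ne_of_mem_erase hk,
        Finset.mem_of_mem_erase (Finset.mem_of_mem_erase (Finset.mem_of_mem_erase hk))⟩
    field_simp
    ring
  have hA : (x b - x a) * (x a ^ p / ∏ k ∈ s.erase a, (x a - x k)) =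
      - (x a ^ p / ∏ k ∈ (s.erase a).erase b, (x a - x k)) := by
    rw [htb]
    have P : ∏ k ∈ s.erase a, (x a - x k) =
        (x a - x b) * ∏ k ∈ (s.erase b).erase a, (x a - x k) :=
      prod_erase_decomp x s a b hb hab.symm
    have hnb : x a - x b ≠ 0 := sub_ne_zero.2 (hd a ha b hb hab)
    have hU : ∏ k ∈ (s.erase b).erase a, (x a - x k) ≠ 0 := by
      apply prod_sub_ne_zero x s _ a ha _ hd
      intro k hk
      exact Finset.mem_erase.2 ⟨Finset.ne_of_mem_erase hk,
        Finset.mem_of_mem_erase (Finset.mem_of_mem_erase hk)⟩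
    rw [P]
    field_simp
    ring
  have hB : (x b - x a) * (x b ^ p / ∏ k ∈ s.erase b, (x b - x k)) =
      x b ^ p / ∏ k ∈ (s.erase a).erase b, (x b - x k) := by
    have P : ∏ k ∈ s.erase b, (x b - x k) =
        (x b - x a) * ∏ k ∈ (s.erase a).erase b, (x b - x k) :=
      prod_erase_decomp x s b a ha hab
    have hna : x b - x a ≠ 0 := sub_ne_zero.2 (hd b hb a ha hab.symm)
    have hU : ∏ k ∈ (s.erase a).erase b, (x b - x k) ≠ 0 := by
      apply prod_sub_ne_zero x s _ b hb _ hd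
      intro k hk
      exact Finset.mem_erase.2 ⟨Finset.ne_of_mem_erase hk,
        Finset.mem_of_mem_erase (Finset.mem_of_mem_erase hk)⟩
    rw [P]
    field_simp
  rw [Finset.sum_congr rfl hterm, Finset.sum_sub_distrib]
  linarith [hA, hB]

lemma Afun_pair (x : ℕ → ℝ) (a b : ℕ) (hab : a ≠ b) (hx : x a ≠ x b) :
    Afun x {a, b} 0 = 0 := by
  have h1 : ({a, b} : Finset ℕ).erase a = {b} := by
    rw [Finset.erase_insert]
    simp [hab]
  have h2 : ({a, b} : Finset ℕ).erase b = {a} := by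
    rw [Finset.pair_comm, Finset.erase_insert]
    simp [hab.symm]
  have hne : x a - x b ≠ 0 := sub_ne_zero.2 hx
  have hne' : x b - x a ≠ 0 := sub_ne_zero.2 hx.symm
  unfold Afun
  rw [Finset.sum_pair hab, h1, h2]
  simp only [pow_zero, Finset.prod_singleton]
  field_simp
  ring

lemma Afun_zero (x : ℕ → ℝ) : ∀ (n : ℕ) (s : Finset ℕ), s.card = n + 2 →
    (∀ j ∈ s, ∀ k ∈ s, j ≠ k → x j ≠ x k) → Afun x s 0 = 0 := by
  intro n
  induction n with
  | zero =>
    intro s hc hd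
    obtain ⟨a, b, hab, rfl⟩ := Finset.card_eq_two.1 hc
    exact Afun_pair x a b hab (hd a (by simp) b (by simp) hab)
  | succ n ih =>
    intro s hc hd
    have h2 : 2 ≤ s.card := by omega
    obtain ⟨a, ha, b, hb, hab⟩ := Finset.one_lt_card.1 (by omega : 1 < s.card)
    have hda : ∀ j ∈ s.erase a, ∀ k ∈ s.erase a, j ≠ k → x j ≠ x k := fun j hj k hk h =>
      hd j (Finset.mem_of_mem_erase hj) k (Finset.mem_of_mem_erase hk) h
    have hdb : ∀ j ∈ s.erase b, ∀ k ∈ s.erase b, j ≠ k → x j ≠ x k := fun j hj k hk h =>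
      hd j (Finset.mem_of_mem_erase hj) k (Finset.mem_of_mem_erase hk) h
    have e1 : Afun x (s.erase a) 0 = 0 := ih _ (by rw [Finset.card_erase_of_mem ha]; omega) hda
    have e2 : Afun x (s.erase b) 0 = 0 := ih _ (by rw [Finset.card_erase_of_mem hb]; omega) hdb
    have := Afun_rec2 x s 0 a b ha hb hab hd
    rw [e1, e2, sub_self] at this
    have hne : x b - x a ≠ 0 := sub_ne_zero.2 (hd b hb a ha hab.symm)
    exact (mul_eq_zero.1 this).resolve_left hne

lemma Afun_eval (x : ℕ → ℝ) : ∀ (p : ℕ) (s : Finset ℕ),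
    (∀ j ∈ s, ∀ k ∈ s, j ≠ k → x j ≠ x k) → p + 1 ≤ s.card →
    Afun x s p = if p + 1 = s.card then 1 else 0 := by
  intro p
  induction p with
  | zero =>
    intro s hd hc
    rcases eq_or_lt_of_le hc with h | h
    · obtain ⟨a, rfl⟩ := Finset.card_eq_one.1 h.symm
      simp [Afun_singleton]
    · obtain ⟨n, hn⟩ : ∃ n, s.card = n + 2 := ⟨s.card - 2, by omega⟩
      rw [Afun_zero x n s hn hd]
      rw [if_neg (by omega)]
  | succ p ih =>
    intro s hd hc
    obtain ⟨b, hb⟩ := Finset.card_pos.1 (by omega : 0 < s.card)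
    have hdb : ∀ j ∈ s.erase b, ∀ k ∈ s.erase b, j ≠ k → x j ≠ x k := fun j hj k hk h =>
      hd j (Finset.mem_of_mem_erase hj) k (Finset.mem_of_mem_erase hk) h
    have hce : (s.erase b).card = s.card - 1 := Finset.card_erase_of_mem hb
    rw [Afun_rec1 x s p b hb hd,
        ih (s.erase b) hdb (by omega),
        ih s hd (by omega), hce]
    split_ifs <;> first | omega | ring1

open Finset

noncomputable def Hfun (x : ℕ → ℝ) : ℕ → ℕ → ℝ
  | 0, _ => 1
  | _+1, 0 => 0
  | d+1, n+1 => Hfun x (d+1) n + x n * Hfun x d (n+1)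
termination_by d n => (d, n)

lemma monotone_snoc {d n : ℕ} (k : Fin d → Fin (n+1)) (hk : Monotone k) :
    Monotone (Fin.snoc k (Fin.last n)) := by
  intro a b hab
  rcases Fin.eq_castSucc_or_eq_last b with ⟨j, rfl⟩ | rfl
  · rcases Fin.eq_castSucc_or_eq_last a with ⟨i, rfl⟩ | rfl
    · simp only [Fin.snoc_castSucc]
      exact hk (Fin.castSucc_le_castSucc_iff.mp hab)
    · exact absurd hab (not_le.2 (Fin.castSucc_lt_last j))
  · simp only [Fin.snoc_last]
    exact Fin.le_last _

lemma Tpart1 (x : ℕ → ℝ) (d n : ℕ) :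
    ∑ k ∈ univ.filter (fun k : Fin (d+1) → Fin (n+1) =>
        Monotone k ∧ ¬ k (Fin.last d) = Fin.last n), ∏ i, x (k i) =
    ∑ k ∈ univ.filter (fun k : Fin (d+1) → Fin n => Monotone k), ∏ i, x (k i) := by
  refine Finset.sum_bij'
    (fun (k : Fin (d+1) → Fin (n+1)) (hk : k ∈ univ.filter _) (i : Fin (d+1)) =>
      (⟨(k i).val, by
        have h := (Finset.mem_filter.1 hk).2
        have h1 : (k i) ≤ k (Fin.last d) := h.1 (Fin.le_last i)
        have h2 : (k (Fin.last d)).val < n + 1 := (k (Fin.last d)).isLt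
        have h3 : (k (Fin.last d)).val ≠ n := fun hc => h.2 (Fin.ext hc)
        have h4 : (k i).val ≤ (k (Fin.last d)).val := h1
        omega⟩ : Fin n))
    (fun (k : Fin (d+1) → Fin n) _ (i : Fin (d+1)) => (k i).castSucc)
    ?_ ?_ ?_ ?_ ?_
  · intro a ha
    refine Finset.mem_filter.2 ⟨Finset.mem_univ _, ?_⟩
    intro i j hij
    exact (Finset.mem_filter.1 ha).2.1 hij
  · intro b hb
    refine Finset.mem_filter.2 ⟨Finset.mem_univ _, ?_, ?_⟩
    · intro i j hij
      exact Fin.castSucc_le_castSucc_iff.2 ((Finset.mem_filter.1 hb).2 hij)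
    · intro hc
      have h5 : ((b (Fin.last d)).castSucc : Fin (n+1)) = Fin.last n := hc
      have h6 := congrArg Fin.val h5
      simp only [Fin.coe_castSucc, Fin.val_last] at h6
      have h7 : (b (Fin.last d)).val < n := (b (Fin.last d)).isLt
      exact absurd h6 (Nat.ne_of_lt h7)
  · intro a ha; funext i; apply Fin.ext; rfl
  · intro b hb; funext i; apply Fin.ext; rfl
  · intro a ha; rfl

lemma Tpart2 (x : ℕ → ℝ) (d n : ℕ) :
    ∑ k ∈ univ.filter (fun k : Fin (d+1) → Fin (n+1) =>
        Monotone k ∧ k (Fin.last d) = Fin.last n), ∏ i, x (k i) =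
    x n * ∑ k ∈ univ.filter (fun k : Fin d → Fin (n+1) => Monotone k), ∏ i, x (k i) := by
  rw [Finset.mul_sum]
  refine Finset.sum_bij'
    (fun (k : Fin (d+1) → Fin (n+1)) _ => k ∘ Fin.castSucc)
    (fun (k : Fin d → Fin (n+1)) _ => Fin.snoc k (Fin.last n))
    ?_ ?_ ?_ ?_ ?_
  · intro a ha
    refine Finset.mem_filter.2 ⟨Finset.mem_univ _, ?_⟩
    intro i j hij
    exact (Finset.mem_filter.1 ha).2.1 (Fin.castSucc_le_castSucc_iff.2 hij)
  · intro b hb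
    exact Finset.mem_filter.2 ⟨Finset.mem_univ _,
      monotone_snoc b (Finset.mem_filter.1 hb).2, Fin.snoc_last _ _⟩
  · intro a ha
    funext i
    rcases Fin.eq_castSucc_or_eq_last i with ⟨j, rfl⟩ | rfl
    · exact Fin.snoc_castSucc _ _ _
    · rw [Fin.snoc_last]
      exact ((Finset.mem_filter.1 ha).2.2).symm
  · intro b hb; funext i; dsimp only [Function.comp]; exact Fin.snoc_castSucc _ _ _
  · intro a ha
    rw [Fin.prod_univ_castSucc]
    have h6 : ((a (Fin.last d) : ℕ)) = n := by
      rw [(Finset.mem_filter.1 ha).2.2]; rfl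
    rw [h6, mul_comm]
    rfl

lemma T_eq_H (x : ℕ → ℝ) : ∀ d n : ℕ,
    (∑ k ∈ univ.filter (fun k : Fin d → Fin n => Monotone k), ∏ i, x (k i)) = Hfun x d n := by
  intro d
  induction d with
  | zero =>
    intro n
    rw [Hfun]
    have hmono : ∀ k : Fin 0 → Fin n, Monotone k := fun k a b _ => a.elim0
    rw [Finset.filter_true_of_mem (fun k _ => hmono k)]
    simp
  | succ d ih =>
    intro n
    induction n with
    | zero =>
      rw [Hfun]
      have : IsEmpty (Fin (d+1) → Fin 0) := ⟨fun k => (k 0).elim0⟩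
      rw [Finset.univ_eq_empty, Finset.filter_empty, Finset.sum_empty]
    | succ n ihn =>
      have hsplit := Finset.sum_filter_add_sum_filter_not
        (univ.filter (fun k : Fin (d+1) → Fin (n+1) => Monotone k))
        (fun k => k (Fin.last d) = Fin.last n) (fun k => ∏ i, x (k i))
      rw [Finset.filter_filter, Finset.filter_filter] at hsplit
      rw [← hsplit, Tpart1, Tpart2, ihn, ih (n+1), Hfun]
      ring

lemma range_succ_erase (n : ℕ) : (Finset.range (n+1)).erase n = Finset.range n := by
  rw [Finset.range_add_one, Finset.erase_insert (by simp)]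

lemma H_eq_A (x : ℕ → ℝ) : ∀ (d n : ℕ),
    (∀ j ∈ Finset.range (n+1), ∀ k ∈ Finset.range (n+1), j ≠ k → x j ≠ x k) →
    Hfun x d (n+1) = Afun x (Finset.range (n+1)) (d + n) := by
  intro d
  induction d with
  | zero =>
    intro n hd
    rw [Hfun, Nat.zero_add, Afun_eval x n _ hd (by simp), if_pos (by simp)]
  | succ d ih =>
    intro n
    induction n with
    | zero =>
      intro hd
      rw [Hfun, Hfun, show Finset.range 1 = {0} from rfl, Afun_singleton,
        ih 0 hd, show Finset.range 1 = {0} from rfl, Afun_singleton, pow_succ]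
      ring
    | succ n ihn =>
      intro hd
      have hdsub : ∀ j ∈ Finset.range (n+1), ∀ k ∈ Finset.range (n+1), j ≠ k → x j ≠ x k := by
        intro j hj k hk h
        exact hd j (by simp at hj ⊢; omega) k (by simp at hk ⊢; omega) h
      rw [Hfun, ihn hdsub, ih (n+1) hd]
      have he : d + 1 + (n + 1) = (d + (n + 1)) + 1 := by omega
      have he2 : d + 1 + n = d + (n + 1) := by omega
      rw [he, he2, Afun_rec1 x (Finset.range (n+2)) (d + (n+1)) (n+1) (by simp) hd,
        range_succ_erase]

lemma ffact_eq_prod (x : ℝ) (n : ℕ) : ffact x n = ∏ i ∈ Finset.range n, (x - i) := by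
  induction n with
  | zero => rfl
  | succ n ih => rw [ffact, ih, Finset.prod_range_succ]

lemma prod_cast_sub (n : ℕ) : ∏ k ∈ Finset.range n, ((n:ℝ) - k) = n.factorial := by
  induction n with
  | zero => simp
  | succ n ih =>
    rw [Finset.prod_range_succ']
    have h1 : ∀ k ∈ Finset.range n, ((n:ℝ) + 1 - (k + 1 : ℕ)) = (n:ℝ) - k := by
      intro k hk; push_cast; ring
    rw [Finset.prod_congr rfl (fun k hk => by push_cast; ring :
      ∀ k ∈ Finset.range n, ((((n+1):ℕ):ℝ) - ((k + 1 : ℕ):ℝ)) = (n:ℝ) - k)]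
    rw [ih]
    push_cast [Nat.factorial_succ]
    ring

lemma prod_add_one_eq_factorial (n : ℕ) :
    ∏ k ∈ Finset.range n, ((k:ℝ) + 1) = n.factorial := by
  induction n with
  | zero => simp
  | succ n ih => rw [Finset.prod_range_succ, ih]; push_cast [Nat.factorial_succ]; ring

lemma erase_range_split (ℓ j : ℕ) (hj : j ≤ ℓ) :
    (Finset.range (ℓ+1)).erase j = Finset.range j ∪ Finset.Ico (j+1) (ℓ+1) := by
  ext k
  simp only [Finset.mem_erase, Finset.mem_range, Finset.mem_union, Finset.mem_Ico]
  omega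

lemma erase_range_prod (ℓ j : ℕ) (hj : j ≤ ℓ) (f : ℕ → ℝ) :
    ∏ k ∈ (Finset.range (ℓ+1)).erase j, f k =
      (∏ k ∈ Finset.range j, f k) * ∏ k ∈ Finset.range (ℓ - j), f (j + 1 + k) := by
  rw [erase_range_split ℓ j hj, Finset.prod_union (by
    simp only [Finset.disjoint_left, Finset.mem_range, Finset.mem_Ico]
    omega)]
  rw [Finset.prod_Ico_eq_prod_range]
  have h : ℓ + 1 - (j + 1) = ℓ - j := by omega
  rw [h]

lemma prod_k_sub_j (ℓ j : ℕ) (hj : j ≤ ℓ) :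
    ∏ k ∈ (Finset.range (ℓ+1)).erase j, ((k:ℝ) - j) =
      (-1:ℝ)^j * j.factorial * (ℓ-j).factorial := by
  rw [erase_range_prod ℓ j hj]
  have h1 : ∏ k ∈ Finset.range j, ((k:ℝ) - j) = (-1:ℝ)^j * j.factorial := by
    have : ∀ k ∈ Finset.range j, ((k:ℝ) - j) = (-1) * ((j:ℝ) - k) := by
      intro k hk; ring
    rw [Finset.prod_congr rfl this, Finset.prod_mul_distrib, Finset.prod_const,
      Finset.card_range, prod_cast_sub]
  have h2 : ∏ k ∈ Finset.range (ℓ - j), (((j + 1 + k : ℕ):ℝ) - j) = (ℓ-j).factorial := by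
    have : ∀ k ∈ Finset.range (ℓ - j), (((j + 1 + k : ℕ):ℝ) - j) = (k:ℝ) + 1 := by
      intro k hk; push_cast; ring
    rw [Finset.prod_congr rfl this, prod_add_one_eq_factorial]
  rw [h1, h2]

lemma ffact_decomp (ℓ j : ℕ) (hj : j ≤ ℓ) (y : ℝ) :
    ffact (2*y) (1+2*ℓ) =
      2*(y - j) * ffact (2*y) j * (-1:ℝ)^(ℓ-j) * ffact (2*(ℓ:ℝ) - 2*y) (ℓ-j) *
        ∏ k ∈ (Finset.range (ℓ+1)).erase j, (2*y - j - k) := by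
  rw [ffact_eq_prod]
  have hsplit : 1 + 2*ℓ = j + ((ℓ+1) + (ℓ-j)) := by omega
  rw [hsplit, Finset.prod_range_add, Finset.prod_range_add]
  -- first factor
  rw [← ffact_eq_prod]
  -- middle factor: ∏ k ∈ range (ℓ+1), (2y - (j+k))
  have hmid : ∏ k ∈ Finset.range (ℓ+1), (2*y - ((j + k : ℕ):ℝ)) =
      (2*(y - j)) * ∏ k ∈ (Finset.range (ℓ+1)).erase j, (2*y - j - k) := by
    rw [← Finset.mul_prod_erase _ _ (Finset.mem_range.2 (by omega) : j ∈ Finset.range (ℓ+1))]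
    have h1 : (2*y - ((j + j : ℕ):ℝ)) = 2*(y - j) := by push_cast; ring
    rw [h1]
    congr 1
    apply Finset.prod_congr rfl
    intro k hk
    push_cast
    ring
  -- tail factor
  have htail : ∏ k ∈ Finset.range (ℓ-j), (2*y - ((j + ((ℓ+1) + k) : ℕ):ℝ)) =
      (-1:ℝ)^(ℓ-j) * ffact (2*(ℓ:ℝ) - 2*y) (ℓ-j) := by
    rw [← Finset.prod_range_reflect]
    have h2 : ∀ k ∈ Finset.range (ℓ-j), (2*y - ((j + ((ℓ+1) + (ℓ - j - 1 - k)) : ℕ):ℝ)) =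
        (-1) * (2*(ℓ:ℝ) - 2*y - k) := by
      intro k hk
      have hk' : k < ℓ - j := Finset.mem_range.1 hk
      have h3 : j + ((ℓ+1) + (ℓ - j - 1 - k)) = 2*ℓ - k := by omega
      rw [h3, Nat.cast_sub (by omega : k ≤ 2*ℓ)]
      push_cast
      ring
    rw [Finset.prod_congr rfl h2, Finset.prod_mul_distrib, Finset.prod_const,
      Finset.card_range, ← ffact_eq_prod]
  rw [hmid, htail]
  ring

theorem csigma_explicit (m ℓ : ℕ) (hℓ : ℓ ≤ m) (y : ℝ)
    (hy : ∀ j : ℕ, j ≤ 2 * ℓ → 2 * y ≠ (j : ℝ)) :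
    csigma m ℓ y =
      2 * (-1 : ℝ) ^ ℓ / ffact (2 * y) (1 + 2 * ℓ) *
        ∑ i ∈ Finset.range (ℓ + 1),
          gbinom (2 * y) i * gbinom (2 * (ℓ : ℝ) - 2 * y) (ℓ - i) *
            (y - (i : ℝ)) ^ (1 + 2 * m) := by
  set x : ℕ → ℝ := fun t => (y - (t:ℝ))^2 with hxdef
  have hdist : ∀ a ∈ Finset.range (ℓ+1), ∀ b ∈ Finset.range (ℓ+1), a ≠ b → x a ≠ x b := by
    intro a ha b hb hab h
    have ha' : a ≤ ℓ := by have := Finset.mem_range.1 ha; omega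
    have hb' : b ≤ ℓ := by have := Finset.mem_range.1 hb; omega
    have hq : (y - (a:ℝ))^2 = (y - (b:ℝ))^2 := h
    have key : ((b:ℝ) - a) * (2*y - a - b) = 0 := by linear_combination hq
    rcases mul_eq_zero.1 key with h1 | h1
    · have : (b:ℝ) = a := by linarith
      exact hab (by exact_mod_cast this.symm)
    · refine hy (a+b) (by omega) ?_
      push_cast
      linarith
  have h1 : csigma m ℓ y = Hfun x (m-ℓ) (ℓ+1) := T_eq_H x (m-ℓ) (ℓ+1)
  rw [h1, H_eq_A x (m-ℓ) ℓ hdist]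
  have hm : m - ℓ + ℓ = m := by omega
  rw [hm]
  unfold Afun
  rw [Finset.mul_sum]
  apply Finset.sum_congr rfl
  intro j hj
  have hjℓ : j ≤ ℓ := by have := Finset.mem_range.1 hj; omega
  have hyj : y - (j:ℝ) ≠ 0 := by
    intro h
    refine hy (2*j) (by omega) ?_
    push_cast
    linarith [sub_eq_zero.1 h]
  have hP : (∏ k ∈ (Finset.range (ℓ+1)).erase j, (2*y - j - k)) ≠ 0 := by
    apply Finset.prod_ne_zero_iff.2
    intro k hk
    have hk' : k ≤ ℓ := by
      have := Finset.mem_range.1 (Finset.mem_of_mem_erase hk); omega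
    intro h
    refine hy (j + k) (by omega) ?_
    push_cast
    linarith
  have hfj : ffact (2*y) j ≠ 0 := by
    rw [ffact_eq_prod]
    apply Finset.prod_ne_zero_iff.2
    intro i hi
    have hi' : i < j := Finset.mem_range.1 hi
    intro h
    exact hy i (by omega) (by linarith)
  have hfneg : ffact (2*(ℓ:ℝ) - 2*y) (ℓ-j) ≠ 0 := by
    rw [ffact_eq_prod]
    apply Finset.prod_ne_zero_iff.2
    intro i hi
    have hi' : i < ℓ - j := Finset.mem_range.1 hi
    intro h
    refine hy (2*ℓ - i) (by omega) ?_
    rw [Nat.cast_sub (by omega)]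
    push_cast
    linarith
  have hfac1 : (j.factorial : ℝ) ≠ 0 := Nat.cast_ne_zero.2 (Nat.factorial_ne_zero j)
  have hfac2 : ((ℓ-j).factorial : ℝ) ≠ 0 := Nat.cast_ne_zero.2 (Nat.factorial_ne_zero _)
  have hD : ∏ k ∈ (Finset.range (ℓ+1)).erase j, (x j - x k) =
      (-1:ℝ)^j * j.factorial * (ℓ-j).factorial *
        ∏ k ∈ (Finset.range (ℓ+1)).erase j, (2*y - j - k) := by
    have hterm : ∀ k ∈ (Finset.range (ℓ+1)).erase j, x j - x k =
        ((k:ℝ) - j) * (2*y - j - k) := by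
      intro k hk
      simp only [hxdef]
      ring
    rw [Finset.prod_congr rfl hterm, Finset.prod_mul_distrib, prod_k_sub_j ℓ j hjℓ]
  rw [hD, ffact_decomp ℓ j hjℓ y]
  unfold gbinom
  have hsign : (-1:ℝ)^(ℓ-j) = (-1:ℝ)^ℓ * (-1:ℝ)^j := by
    rw [← pow_add]
    conv_rhs => rw [show ℓ + j = (ℓ - j) + 2*j by omega]
    rw [pow_add, pow_mul]
    norm_num
  have hpow : (y - (j:ℝ))^(1+2*m) = (y - (j:ℝ)) * ((y - (j:ℝ))^2)^m := by
    rw [pow_add, pow_mul, pow_one]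
  have hxj : x j ^ m = ((y - (j:ℝ))^2)^m := rfl
  rw [hxj, hsign, hpow]
  have hneg1j : (-1:ℝ)^j ≠ 0 := by positivity
  have hneg1l : (-1:ℝ)^ℓ ≠ 0 := by positivity
  field_simp
  rw [show 2 * ((ℓ:ℝ) - y) = 2*(ℓ:ℝ) - 2*y by ring, show y*2 = 2*y by ring]
  rw [mul_assoc, div_mul_cancel_right₀ (mul_ne_zero hfj hfneg), one_div]
end

section
/- For all nonnegative integers m and n with n > m + 1, C_{1+2m}(n) := Σ_{k=1}^{n} (−1)^(k−1) · [2n, n−k] · k^(1+2m) satisfies C_{1+2m}(n) = (1/8) · Σ_{ℓ=0}^{m} (−1)^ℓ · ⟨2n − 1/2⟩_{2ℓ} · { ((2n−2ℓ−1)/(n−ℓ−1)) · [2n−2ℓ, n−ℓ] + (−1)^(n+ℓ) · ((1+2n)(1+2ℓ)/(n−ℓ−1)) · [2n−ℓ, ℓ]^(−1) } · σ_{m,ℓ}(n − 1/2). -/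
open Finset

/-- Rising factorial `(x)_n = x(x+1)⋯(x+n-1)`. -/
noncomputable def rfact (x : ℝ) : ℕ → ℝ
  | 0 => 1
  | n + 1 => rfact x n * (x + n)

/-- The bracket coefficient `[n, k] = (1/2)_n / ((1/2)_k (1/2)_{n-k})`. -/
noncomputable def brkt (n k : ℕ) : ℝ :=
  rfact (1 / 2) n / (rfact (1 / 2) k * rfact (1 / 2) (n - k))

lemma rfact_succ (x : ℝ) (n : ℕ) : rfact x (n + 1) = rfact x n * (x + n) := rfl

lemma ffact_succ (x : ℝ) (n : ℕ) : ffact x (n + 1) = ffact x n * (x - n) := rfl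

lemma rfact_pos {x : ℝ} (hx : 0 < x) (n : ℕ) : 0 < rfact x n := by
  induction n with
  | zero => norm_num [rfact]
  | succ k ih =>
      rw [rfact_succ]
      have : (0:ℝ) < x + k := by positivity
      positivity

lemma rhalf_pos (n : ℕ) : 0 < rfact (1/2) n := rfact_pos (by norm_num) n

lemma rhalf_ne (n : ℕ) : rfact (1/2) n ≠ 0 := (rhalf_pos n).ne'

lemma rfact_add (x : ℝ) (a b : ℕ) : rfact x (a + b) = rfact x a * rfact (x + a) b := by
  induction b with
  | zero => simp [rfact]
  | succ k ih =>
      rw [show a + (k+1) = (a + k) + 1 from rfl, rfact_succ, ih, rfact_succ]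
      push_cast
      ring

lemma ffact_add (x : ℝ) (a b : ℕ) : ffact x (a + b) = ffact x a * ffact (x - a) b := by
  induction b with
  | zero => simp [ffact]
  | succ k ih =>
      rw [show a + (k+1) = (a + k) + 1 from rfl, ffact_succ, ih, ffact_succ]
      push_cast
      ring

lemma ffact_neg (x : ℝ) (n : ℕ) : ffact (-x) n = (-1)^n * rfact x n := by
  induction n with
  | zero => simp [ffact, rfact]
  | succ k ih => rw [ffact_succ, ih, rfact_succ]; ring

lemma rfact_mul_ffact (N : ℕ) : ∀ k, k ≤ N →
    rfact (1/2) (N - k) * ffact ((N:ℝ) - 1/2) k = rfact (1/2) N := by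
  intro k
  induction k with
  | zero => simp [ffact]
  | succ k ih =>
      intro hk
      have ihk := ih (by omega)
      rw [ffact_succ]
      rw [show N - k = (N - (k+1)) + 1 from by omega, rfact_succ] at ihk
      have hc : ((N - (k+1) : ℕ) : ℝ) = (N:ℝ) - k - 1 := by
        have : ((N - (k+1) : ℕ) : ℝ) = (N:ℝ) - ((k:ℝ)+1) := by
          rw [Nat.cast_sub hk]; push_cast; ring
        linarith [this]
      rw [hc] at ihk
      calc rfact (1/2) (N - (k+1)) * (ffact ((N:ℝ) - 1/2) k * ((N:ℝ) - 1/2 - k))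
          = rfact (1/2) (N - (k+1)) * (1/2 + ((N:ℝ) - k - 1)) * ffact ((N:ℝ) - 1/2) k := by ring
        _ = rfact (1/2) N := ihk

noncomputable def B (N k : ℕ) : ℝ :=
  rfact (1/2) (2*N) * ffact ((N:ℝ) - 1/2) k / (rfact (1/2) N ^ 2 * rfact ((N:ℝ) + 1/2) k)

lemma rfact_shift_pos (N k : ℕ) : 0 < rfact ((N:ℝ) + 1/2) k := rfact_pos (by positivity) k

lemma B_eq_brkt (N k : ℕ) (hk : k ≤ N) : B N k = brkt (2*N) (N - k) := by
  have h1 : rfact (1/2) (N - k) * ffact ((N:ℝ) - 1/2) k = rfact (1/2) N :=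
    rfact_mul_ffact N k hk
  have h2 : rfact (1/2) (N + k) = rfact (1/2) N * rfact ((N:ℝ) + 1/2) k := by
    rw [rfact_add (1/2) N k]
    ring_nf
  have h3 : 2*N - (N-k) = N + k := by omega
  rw [brkt, h3, B]
  have p1 : (0:ℝ) < rfact (1/2) N ^ 2 * rfact ((N:ℝ) + 1/2) k := by
    have := rhalf_pos N; have := rfact_shift_pos N k; positivity
  have p2 : (0:ℝ) < rfact (1/2) (N - k) * rfact (1/2) (N + k) := by
    have := rhalf_pos (N-k); have := rhalf_pos (N+k); positivity
  rw [div_eq_div_iff p1.ne' p2.ne']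
  rw [h2, ← h1]
  ring

lemma B_succ (N k : ℕ) :
    B N (k+1) * ((N:ℝ) + k + 1/2) = B N k * ((N:ℝ) - k - 1/2) := by
  rw [B, B, ffact_succ, rfact_succ]
  have h1 : rfact (1/2) N ≠ 0 := rhalf_ne N
  have h2 : rfact ((N:ℝ) + 1/2) k ≠ 0 := (rfact_shift_pos N k).ne'
  have h3 : ((N:ℝ) + 1/2 + k) ≠ 0 := by positivity
  rw [div_mul_eq_mul_div, div_mul_eq_mul_div,
    div_eq_div_iff (by exact mul_ne_zero (pow_ne_zero 2 h1) (mul_ne_zero h2 h3))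
      (by exact mul_ne_zero (pow_ne_zero 2 h1) h2)]
  ring

noncomputable def Qp (N : ℕ) (x : ℝ) : ℝ :=
  (4*x^2 + (4*(N:ℝ) - 4)*x - (2*(N:ℝ) - 1)) / (8*((N:ℝ) - 1))

lemma Qp_fun (N : ℕ) (hN : 2 ≤ N) (x : ℝ) :
    ((N:ℝ) - x - 1/2) * Qp N (x+1) + ((N:ℝ) + x + 1/2) * Qp N x
      = ((N:ℝ) + x + 1/2) * x := by
  have hN1 : ((N:ℝ) - 1) ≠ 0 := by
    have : (2:ℝ) ≤ (N:ℝ) := by exact_mod_cast hN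
    nlinarith
  rw [Qp, Qp]
  field_simp
  ring

lemma tele (N : ℕ) (hN : 2 ≤ N) (k : ℕ) :
    B N (k+1) * Qp N ((k:ℝ)+1) + B N k * Qp N k = B N k * k := by
  have hden : (0:ℝ) < (N:ℝ) + k + 1/2 := by positivity
  have hBs := B_succ N k
  have hQ := Qp_fun N hN (k : ℝ)
  apply mul_right_cancel₀ hden.ne'
  calc (B N (k+1) * Qp N ((k:ℝ)+1) + B N k * Qp N k) * ((N:ℝ) + k + 1/2)
      = (B N (k+1) * ((N:ℝ) + k + 1/2)) * Qp N ((k:ℝ)+1)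
        + B N k * (((N:ℝ) + k + 1/2) * Qp N k) := by ring
    _ = B N k * (((N:ℝ) - k - 1/2) * Qp N ((k:ℝ)+1) + ((N:ℝ) + k + 1/2) * Qp N k) := by
        rw [hBs]; ring
    _ = B N k * (((N:ℝ) + k + 1/2) * k) := by rw [hQ]
    _ = B N k * k * ((N:ℝ) + k + 1/2) := by ring

lemma sum_B (N : ℕ) (hN : 2 ≤ N) (M : ℕ) :
    ∑ k ∈ Finset.Icc 1 M, (-1:ℝ)^(k-1) * B N k * k
      = (-1:ℝ)^(M+1) * B N (M+1) * Qp N ((M:ℝ)+1) + B N 1 * Qp N 1 := by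
  induction M with
  | zero =>
      rw [show Finset.Icc 1 0 = ∅ from rfl]
      simp
  | succ M ih =>
      have ht := tele N hN (M+1)
      push_cast at ht
      rw [Finset.sum_Icc_succ_top (by omega), ih]
      rw [show M + 1 - 1 = M from rfl]
      push_cast
      linear_combination (-(-1:ℝ)^M) * ht

noncomputable def Pp (n ℓ : ℕ) (x : ℝ) : ℝ :=
  ∏ j ∈ Finset.range ℓ, (x^2 - ((n:ℝ) - 1/2 - (j:ℝ))^2)

noncomputable def Fs (n ℓ M : ℕ) : ℝ :=
  ∑ k ∈ Finset.Icc 1 M, (-1:ℝ)^(k-1) * B n k * (k:ℝ) * Pp n ℓ (k:ℝ)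

lemma Fs_zero (N : ℕ) (hN : 2 ≤ N) (M : ℕ) :
    Fs N 0 M = (-1:ℝ)^(M+1) * B N (M+1) * Qp N ((M:ℝ)+1) + B N 1 * Qp N 1 := by
  rw [← sum_B N hN M, Fs]
  apply Finset.sum_congr rfl
  intro k _
  rw [Pp]
  simp

lemma ffact_x_sub (x : ℝ) (k : ℕ) : ffact x k * (x - k) = x * ffact (x-1) k := by
  induction k with
  | zero => simp [ffact]
  | succ j ih =>
      rw [ffact_succ, ffact_succ]
      push_cast
      linear_combination (x - (j:ℝ) - 1) * ih

lemma rfact_x_add (x : ℝ) (k : ℕ) : rfact x k * (x + k) = x * rfact (x+1) k := by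
  induction k with
  | zero => simp [rfact]
  | succ j ih =>
      rw [rfact_succ, rfact_succ]
      push_cast
      linear_combination (x + (j:ℝ) + 1) * ih

lemma B_mul_node (N k : ℕ) :
    B (N+1) k * ((k:ℝ)^2 - (((N:ℝ)+1) - 1/2)^2)
      = -((2*(N:ℝ) + 3/2) * (2*(N:ℝ) + 1/2)) * B N k := by
  have h1 : ffact ((N:ℝ)+1/2) k * (((N:ℝ)+1/2) - k) = ((N:ℝ)+1/2) * ffact ((N:ℝ)-1/2) k := by
    have := ffact_x_sub ((N:ℝ)+1/2) k
    rw [show ((N:ℝ)+1/2) - 1 = (N:ℝ)-1/2 by ring] at this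
    exact this
  have h2 : rfact ((N:ℝ)+1/2) k * (((N:ℝ)+1/2) + k) = ((N:ℝ)+1/2) * rfact ((N:ℝ)+3/2) k := by
    have := rfact_x_add ((N:ℝ)+1/2) k
    rw [show ((N:ℝ)+1/2) + 1 = (N:ℝ)+3/2 by ring] at this
    exact this
  have h3 : rfact (1/2) (2*(N+1)) = rfact (1/2) (2*N) * ((1/2:ℝ) + 2*N) * ((1/2:ℝ) + (2*N+1)) := by
    rw [show 2*(N+1) = (2*N+1)+1 from by omega, rfact_succ, rfact_succ]
    push_cast; ring
  have h4 : rfact (1/2) (N+1) = rfact (1/2) N * ((1/2:ℝ) + N) := rfact_succ _ _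
  have e1 : B (N+1) k = rfact (1/2) (2*(N+1)) * ffact ((N:ℝ)+1/2) k
      / (rfact (1/2) (N+1) ^ 2 * rfact ((N:ℝ)+3/2) k) := by
    rw [B]
    norm_num
    rw [show ((N:ℕ):ℝ) + 1 - 1/2 = (N:ℝ)+1/2 by push_cast; ring,
        show ((N:ℕ):ℝ) + 1 + 1/2 = (N:ℝ)+3/2 by push_cast; ring]
  rw [e1, B, h3, h4]
  have n1 : rfact (1/2) N ≠ 0 := rhalf_ne N
  have n2 : rfact ((N:ℝ)+1/2) k ≠ 0 := (rfact_shift_pos N k).ne'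
  have n3 : rfact ((N:ℝ)+3/2) k ≠ 0 := (rfact_pos (by positivity) k).ne'
  have n4 : ((N:ℝ)+1/2) ≠ 0 := by positivity
  rw [div_mul_eq_mul_div, ← mul_div_assoc,
      div_eq_div_iff (by positivity) (by positivity)]
  linear_combination (rfact (1/2) (2*N) * ((1/2:ℝ) + 2*N) * ((1/2:ℝ) + (2*N+1)) *
      rfact (1/2) N ^ 2 * (((N:ℝ)+1/2) + k) * rfact ((N:ℝ)+1/2) k * (-1)) * h1
    + (rfact (1/2) (2*N) * ((1/2:ℝ) + 2*N) * ((1/2:ℝ) + (2*N+1)) * rfact (1/2) N ^ 2 *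
      ((N:ℝ)+1/2) * ffact ((N:ℝ)-1/2) k * (-1)) * h2

lemma Pp_succ (n ℓ : ℕ) (x : ℝ) :
    Pp (n+1) (ℓ+1) x = (x^2 - (((n:ℝ)+1) - 1/2)^2) * Pp n ℓ x := by
  rw [Pp, Pp, Finset.prod_range_succ']
  have h2 : ∏ j ∈ Finset.range ℓ, (x^2 - (((n+1:ℕ):ℝ) - 1/2 - ((j+1:ℕ):ℝ))^2)
      = ∏ j ∈ Finset.range ℓ, (x^2 - ((n:ℝ) - 1/2 - (j:ℝ))^2) :=
    Finset.prod_congr rfl (fun j _ => by push_cast; ring)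
  rw [h2]
  push_cast
  ring

lemma Fs_reduce (n ℓ M : ℕ) :
    Fs (n+1) (ℓ+1) M = -((2*(n:ℝ) + 3/2) * (2*(n:ℝ) + 1/2)) * Fs n ℓ M := by
  rw [Fs, Fs, Finset.mul_sum]
  apply Finset.sum_congr rfl
  intro k _
  rw [Pp_succ]
  have hb := B_mul_node n k
  calc (-1:ℝ)^(k-1) * B (n+1) k * (k:ℝ) * (((k:ℝ)^2 - (((n:ℝ)+1) - 1/2)^2) * Pp n ℓ (k:ℝ))
      = (-1:ℝ)^(k-1) * (k:ℝ) * Pp n ℓ (k:ℝ) *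
          (B (n+1) k * ((k:ℝ)^2 - (((n:ℝ)+1) - 1/2)^2)) := by ring
    _ = (-1:ℝ)^(k-1) * (k:ℝ) * Pp n ℓ (k:ℝ) *
          (-((2*(n:ℝ) + 3/2) * (2*(n:ℝ) + 1/2)) * B n k) := by rw [hb]
    _ = -((2*(n:ℝ) + 3/2) * (2*(n:ℝ) + 1/2)) *
          ((-1:ℝ)^(k-1) * B n k * (k:ℝ) * Pp n ℓ (k:ℝ)) := by ring

lemma Fs_eq (M : ℕ) : ∀ ℓ n : ℕ, ℓ ≤ n →
    Fs n ℓ M = (-1:ℝ)^ℓ * ffact (2*(n:ℝ) - 1/2) (2*ℓ) * Fs (n-ℓ) 0 M := by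
  intro ℓ
  induction ℓ with
  | zero => intro n _; simp [ffact]
  | succ ℓ ih =>
      intro n hn
      obtain ⟨n', rfl⟩ : ∃ n', n = n' + 1 := ⟨n - 1, by omega⟩
      rw [Fs_reduce, ih n' (by omega)]
      have hff : ffact (2*((n':ℝ)+1) - 1/2) (2*(ℓ+1))
          = (2*(n':ℝ) + 3/2) * (2*(n':ℝ) + 1/2) * ffact (2*(n':ℝ) - 1/2) (2*ℓ) := by
        rw [show 2*(ℓ+1) = 2 + 2*ℓ from by omega, ffact_add]
        have : ffact (2*((n':ℝ)+1) - 1/2) 2 = (2*(n':ℝ) + 3/2) * (2*(n':ℝ) + 1/2) := by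
          show (1 : ℝ) * (2*((n':ℝ)+1) - 1/2 - (0:ℕ)) * (2*((n':ℝ)+1) - 1/2 - (1:ℕ)) = _
          push_cast; ring
        rw [this, show 2*((n':ℝ)+1) - 1/2 - (2:ℕ) = 2*(n':ℝ) - 1/2 by push_cast; ring]
      rw [show n' + 1 - (ℓ+1) = n' - ℓ from by omega]
      push_cast
      push_cast at hff
      rw [hff]
      ring

set_option maxHeartbeats 1000000 in
lemma E1 (N : ℕ) (hN : 2 ≤ N) :
    B N 1 * Qp N 1 = (1/8) * ((2*(N:ℝ) - 1)/((N:ℝ) - 1)) * brkt (2*N) N := by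
  have hb : B N 1 = brkt (2*N) (N-1) := B_eq_brkt N 1 (by omega)
  have h3 : 2*N - (N-1) = N + 1 := by omega
  have h4 : 2*N - N = N := by omega
  rw [hb, Qp, brkt, brkt, h3, h4]
  have r1 : rfact (1/2) (N+1) = rfact (1/2) N * ((1/2:ℝ) + N) := rfact_succ _ _
  have r2 : rfact (1/2) N = rfact (1/2) (N-1) * ((N:ℝ) - 1/2) := by
    conv_lhs => rw [show N = (N-1)+1 from by omega]
    rw [rfact_succ, show ((N-1:ℕ):ℝ) = (N:ℝ) - 1 from by
      rw [Nat.cast_sub (by omega)]; norm_num]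
    ring
  have hNc : (2:ℝ) ≤ (N:ℝ) := by exact_mod_cast hN
  have n0 : rfact (1/2) (N-1) ≠ 0 := rhalf_ne _
  have n1 : rfact (1/2) N ≠ 0 := rhalf_ne _
  have n2 : rfact (1/2) (N+1) ≠ 0 := rhalf_ne _
  have n3 : ((N:ℝ) - 1) ≠ 0 := by nlinarith
  have n4 : ((N:ℝ) - 1/2) ≠ 0 := by nlinarith
  have n5 : ((1/2:ℝ) + N) ≠ 0 := by positivity
  have d8 : (8:ℝ)*((N:ℝ)-1) ≠ 0 := by intro hc; apply n3; linarith
  rw [r1, r2, div_mul_div_comm, div_mul_div_comm, div_mul_div_comm,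
    div_eq_div_iff
      (mul_ne_zero (mul_ne_zero n0 (mul_ne_zero (mul_ne_zero n0 n4) n5)) d8)
      (mul_ne_zero d8 (mul_ne_zero (mul_ne_zero n0 n4) (mul_ne_zero n0 n4)))]
  ring

lemma E2 (n ℓ : ℕ) (h1 : ℓ + 2 ≤ n) :
    (-1:ℝ)^(n+1) * B (n-ℓ) (n+1) * Qp (n-ℓ) ((n:ℝ)+1)
      = (1/8) * ((-1:ℝ)^(n+ℓ) *
          ((1 + 2*(n:ℝ)) * (1 + 2*(ℓ:ℝ)) / ((n:ℝ) - (ℓ:ℝ) - 1)) * (brkt (2*n - ℓ) ℓ)⁻¹) := by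
  set N := n - ℓ with hNdef
  have hNn : (N:ℝ) = (n:ℝ) - (ℓ:ℝ) := by
    rw [hNdef, Nat.cast_sub (by omega)]
  have hnN : n + 1 = N + (ℓ + 1) := by omega
  -- value of B N (n+1)
  have hf : ffact ((N:ℝ) - 1/2) (n+1)
      = rfact (1/2) N * ((-1:ℝ)^(ℓ+1) * rfact (1/2) (ℓ+1)) := by
    rw [hnN, ffact_add]
    have hfN : ffact ((N:ℝ) - 1/2) N = rfact (1/2) N := by
      have := rfact_mul_ffact N N le_rfl
      simpa [Nat.sub_self, rfact] using this
    have hx : (N:ℝ) - 1/2 - (N:ℕ) = -(1/2 : ℝ) := by ring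
    rw [hfN, hx, ffact_neg]
  have hr : rfact (1/2) N * rfact ((N:ℝ) + 1/2) (n+1) = rfact (1/2) (N + (n+1)) := by
    rw [rfact_add (1/2) N (n+1), show (1/2:ℝ) + N = (N:ℝ) + 1/2 from by ring]
  have hB : B N (n+1) = (-1:ℝ)^(ℓ+1) * rfact (1/2) (2*N) * rfact (1/2) (ℓ+1)
      / rfact (1/2) (N + (n+1)) := by
    have n1 : rfact (1/2) N ≠ 0 := rhalf_ne _
    have n2 : rfact ((N:ℝ) + 1/2) (n+1) ≠ 0 := (rfact_shift_pos N (n+1)).ne'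
    have n3 : rfact (1/2) N ^ 2 * rfact ((N:ℝ) + 1/2) (n+1) ≠ 0 := by
      exact mul_ne_zero (pow_ne_zero 2 n1) n2
    have n4 : rfact (1/2) (N + (n+1)) ≠ 0 := rhalf_ne _
    rw [B, hf, div_eq_div_iff n3 n4]
    linear_combination (-(rfact (1/2) (2*N) * ((-1:ℝ)^(ℓ+1) * rfact (1/2) (ℓ+1)) *
      rfact (1/2) N)) * hr
  -- brkt inverse
  have hb1 : 2*n - ℓ = N + n := by omega
  have hb2 : (N + n) - ℓ = 2*N := by omega
  have hbrkt : (brkt (2*n - ℓ) ℓ)⁻¹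
      = rfact (1/2) ℓ * rfact (1/2) (2*N) / rfact (1/2) (N + n) := by
    rw [brkt, hb1, hb2, inv_div]
  have hr1 : rfact (1/2) (ℓ+1) = rfact (1/2) ℓ * ((1/2:ℝ) + ℓ) := rfact_succ _ _
  have hr2 : rfact (1/2) (N + (n+1)) = rfact (1/2) (N + n) * ((1/2:ℝ) + ((N:ℝ) + n)) := by
    rw [show N + (n+1) = (N+n)+1 from rfl, rfact_succ]
    push_cast
    ring
  have hnc : (ℓ:ℝ) + 2 ≤ (n:ℝ) := by exact_mod_cast h1
  have hN2 : 2 ≤ N := by omega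
  have hNc : (2:ℝ) ≤ (N:ℝ) := by exact_mod_cast hN2
  have mN : ((N:ℝ) - 1) ≠ 0 := by nlinarith
  have h8 : (8*((N:ℝ)-1)) ≠ 0 := by
    intro hcon; apply mN; linarith
  have hQv : Qp N ((n:ℝ)+1)
      = ((2*(n:ℝ)+1) * (2*((n:ℝ) + (N:ℝ)) + 1)) / (8*((N:ℝ)-1)) := by
    rw [Qp, div_eq_div_iff h8 h8]
    ring
  have hmℓ : (n:ℝ) - (ℓ:ℝ) - 1 = (N:ℝ) - 1 := by rw [hNn]
  rw [hB, hbrkt, hr1, hr2, hQv, hmℓ]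
  have m1 : rfact (1/2) ℓ ≠ 0 := rhalf_ne _
  have m2 : rfact (1/2) (2*N) ≠ 0 := rhalf_ne _
  have m3 : rfact (1/2) (N+n) ≠ 0 := rhalf_ne _
  have m5 : ((1/2:ℝ) + ℓ) ≠ 0 := by positivity
  have m6 : ((1/2:ℝ) + ((N:ℝ) + n)) ≠ 0 := by positivity
  field_simp [m1, m2, m3, mN, m5, m6]
  ring

noncomputable def hh (d ℓ : ℕ) (y : ℝ) : ℝ :=
  ∑ k ∈ Finset.univ.filter (fun k : Fin d → Fin (ℓ + 1) => Monotone k),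
    ∏ i, (y - (k i : ℝ)) ^ 2

lemma csigma_eq_hh (m ℓ : ℕ) (y : ℝ) : csigma m ℓ y = hh (m - ℓ) ℓ y := rfl

lemma hh_zero (ℓ : ℕ) (y : ℝ) : hh 0 ℓ y = 1 := by
  rw [hh]
  have hmono : ∀ f ∈ (Finset.univ : Finset (Fin 0 → Fin (ℓ+1))), Monotone f :=
    fun f _ => fun a _ _ => a.elim0
  rw [Finset.filter_true_of_mem hmono]
  simp

lemma hh_d_zero (d : ℕ) (y : ℝ) : hh d 0 y = (y^2)^d := by
  rw [hh]
  have hmono : ∀ f ∈ (Finset.univ : Finset (Fin d → Fin (0+1))), Monotone f := by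
    intro f _ a b _
    rw [Fin.le_def]
    have h1 := (f a).isLt
    have h2 := (f b).isLt
    omega
  rw [Finset.filter_true_of_mem hmono]
  have h1 : ∀ k : Fin d → Fin 1, ∏ i, (y - ((k i : ℕ) : ℝ))^2 = (y^2)^d := by
    intro k
    have hz : ∀ i, ((k i : ℕ) : ℝ) = 0 := by
      intro i
      have h1 := (k i).isLt
      have : ((k i : ℕ)) = 0 := by omega
      rw [this]; simp
    calc ∏ i : Fin d, (y - ((k i : ℕ) : ℝ))^2 = ∏ _i : Fin d, y^2 := by
          apply Finset.prod_congr rfl; intro i _; rw [hz i]; ring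
      _ = (y^2)^d := by rw [Finset.prod_const]; simp
  rw [Finset.sum_congr rfl (fun k _ => h1 k), Finset.sum_const]
  have : Fintype.card (Fin d → Fin 1) = 1 := by simp
  rw [Finset.card_univ, this, one_smul]

lemma monotone_snoc_s9 {d a : ℕ} (g : Fin d → Fin (a+1)) (hg : Monotone g) :
    Monotone (Fin.snoc g (Fin.last a) : Fin (d+1) → Fin (a+1)) := by
  intro i j hij
  induction j using Fin.lastCases with
  | last => rw [Fin.snoc_last]; exact Fin.le_last _
  | cast j' =>
      induction i using Fin.lastCases with
      | last =>
          exact absurd (lt_of_le_of_lt hij (Fin.castSucc_lt_last j')) (lt_irrefl _)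
      | cast i' =>
          rw [Fin.snoc_castSucc, Fin.snoc_castSucc]
          exact hg (Fin.castSucc_le_castSucc_iff.mp hij)

lemma hh_rec (d ℓ : ℕ) (y : ℝ) :
    hh (d+1) (ℓ+1) y = hh (d+1) ℓ y + (y - ((ℓ:ℝ)+1))^2 * hh d (ℓ+1) y := by
  have hsplit := Finset.sum_filter_add_sum_filter_not
    (Finset.univ.filter (fun k : Fin (d+1) → Fin (ℓ+1+1) => Monotone k))
    (fun k => k (Fin.last d) = Fin.last (ℓ+1))
    (fun k => ∏ i, (y - ((k i : ℕ) : ℝ))^2)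
  rw [hh, ← hsplit]
  have Hlast : ∑ k ∈ (Finset.univ.filter
        (fun k : Fin (d+1) → Fin (ℓ+1+1) => Monotone k)).filter
        (fun k => k (Fin.last d) = Fin.last (ℓ+1)),
        ∏ i, (y - ((k i : ℕ) : ℝ))^2
      = (y - ((ℓ:ℝ)+1))^2 * hh d (ℓ+1) y := by
    rw [hh, Finset.mul_sum]
    apply Finset.sum_nbij' (i := fun f : Fin (d+1) → Fin (ℓ+1+1) => f ∘ Fin.castSucc)
      (j := fun g : Fin d → Fin (ℓ+1+1) => Fin.snoc g (Fin.last (ℓ+1)))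
    · intro f hf
      simp only [Finset.mem_filter, Finset.mem_univ, true_and] at hf ⊢
      exact hf.1.comp (Fin.strictMono_castSucc.monotone)
    · intro g hg
      simp only [Finset.mem_filter, Finset.mem_univ, true_and] at hg ⊢
      exact ⟨monotone_snoc_s9 g hg, Fin.snoc_last _ _⟩
    · intro f hf
      simp only [Finset.mem_filter, Finset.mem_univ, true_and] at hf
      funext i
      induction i using Fin.lastCases with
      | last => rw [Fin.snoc_last, hf.2]
      | cast i' => rw [Fin.snoc_castSucc]; rfl
    · intro g hg
      funext i
      simp [Fin.snoc_castSucc]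
    · intro f hf
      simp only [Finset.mem_filter, Finset.mem_univ, true_and] at hf
      rw [Fin.prod_univ_castSucc (f := fun i => (y - ((f i : ℕ) : ℝ))^2)]
      rw [hf.2]
      have : ((Fin.last (ℓ+1) : Fin (ℓ+1+1)) : ℕ) = ℓ + 1 := rfl
      rw [this]
      simp only [Function.comp_apply]
      push_cast
      ring
  have Hnot : ∑ k ∈ (Finset.univ.filter
        (fun k : Fin (d+1) → Fin (ℓ+1+1) => Monotone k)).filter
        (fun k => ¬ k (Fin.last d) = Fin.last (ℓ+1)),
        ∏ i, (y - ((k i : ℕ) : ℝ))^2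
      = hh (d+1) ℓ y := by
    rw [hh]
    apply Finset.sum_nbij'
      (i := fun f : Fin (d+1) → Fin (ℓ+1+1) =>
        (fun i' => (⟨min (f i' : ℕ) ℓ, by omega⟩ : Fin (ℓ+1))))
      (j := fun g : Fin (d+1) → Fin (ℓ+1) => (fun i' => Fin.castSucc (g i')))
    · intro f hf
      simp only [Finset.mem_filter, Finset.mem_univ, true_and] at hf ⊢
      intro a b hab
      have := hf.1 hab
      rw [Fin.le_def] at this ⊢
      simp only []
      omega
    · intro g hg
      simp only [Finset.mem_filter, Finset.mem_univ, true_and] at hg ⊢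
      constructor
      · intro a b hab
        have := hg hab
        rw [Fin.le_def] at this ⊢
        simpa using this
      · intro hcon
        have := congrArg (fun z : Fin (ℓ+1+1) => (z : ℕ)) hcon
        simp only [Fin.coe_castSucc, Fin.val_last] at this
        have := (g (Fin.last d)).isLt
        omega
    · intro f hf
      simp only [Finset.mem_filter, Finset.mem_univ, true_and] at hf
      have hlt : ∀ i', (f i' : ℕ) ≤ ℓ := by
        intro i'
        have h1 : f i' ≤ f (Fin.last d) := hf.1 (Fin.le_last i')
        have h2 : (f (Fin.last d) : ℕ) < ℓ + 1 + 1 := (f (Fin.last d)).isLt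
        have h3 : (f (Fin.last d) : ℕ) ≠ ℓ + 1 := by
          intro hc
          exact hf.2 (Fin.ext hc)
        rw [Fin.le_def] at h1
        omega
      funext i'
      apply Fin.ext
      simp only [Fin.coe_castSucc]
      have := hlt i'
      omega
    · intro g hg
      funext i'
      apply Fin.ext
      simp only [Fin.coe_castSucc]
      have := (g i').isLt
      omega
    · intro f hf
      simp only [Finset.mem_filter, Finset.mem_univ, true_and] at hf
      have hlt : ∀ i', (f i' : ℕ) ≤ ℓ := by
        intro i'
        have h1 : f i' ≤ f (Fin.last d) := hf.1 (Fin.le_last i')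
        have h2 : (f (Fin.last d) : ℕ) < ℓ + 1 + 1 := (f (Fin.last d)).isLt
        have h3 : (f (Fin.last d) : ℕ) ≠ ℓ + 1 := by
          intro hc
          exact hf.2 (Fin.ext hc)
        rw [Fin.le_def] at h1
        omega
      apply Finset.prod_congr rfl
      intro i' _
      congr 2
      have := hlt i'
      norm_cast
      simp only [Fin.val_natCast]
      omega
  rw [Hlast, Hnot]
  ring

lemma newton (y : ℝ) : ∀ (m : ℕ) (x : ℝ),
    x^m = ∑ ℓ ∈ Finset.range (m+1),
      hh (m-ℓ) ℓ y * ∏ j ∈ Finset.range ℓ, (x - (y - (j:ℝ))^2) := by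
  intro m
  induction m with
  | zero => intro x; simp [hh_zero]
  | succ m ih =>
      intro x
      have C2 : ∑ ℓ ∈ Finset.range (m+1),
            hh (m-ℓ) ℓ y * ∏ j ∈ Finset.range (ℓ+1), (x - (y-(j:ℝ))^2)
          + ∑ ℓ ∈ Finset.range (m+1),
            (y-(ℓ:ℝ))^2 * (hh (m-ℓ) ℓ y * ∏ j ∈ Finset.range ℓ, (x - (y-(j:ℝ))^2))
          = x^(m+1) := by
        rw [← Finset.sum_add_distrib]
        have hcg : ∀ ℓ ∈ Finset.range (m+1),
            hh (m-ℓ) ℓ y * ∏ j ∈ Finset.range (ℓ+1), (x - (y-(j:ℝ))^2)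
              + (y-(ℓ:ℝ))^2 * (hh (m-ℓ) ℓ y * ∏ j ∈ Finset.range ℓ, (x - (y-(j:ℝ))^2))
            = x * (hh (m-ℓ) ℓ y * ∏ j ∈ Finset.range ℓ, (x - (y-(j:ℝ))^2)) := by
          intro ℓ _
          rw [Finset.prod_range_succ]
          ring
        rw [Finset.sum_congr rfl hcg, ← Finset.mul_sum, ← ih x]
        ring
      rw [← C2]
      rw [Finset.sum_range_succ
        (f := fun ℓ => hh (m+1-ℓ) ℓ y * ∏ j ∈ Finset.range ℓ, (x - (y-(j:ℝ))^2))]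
      rw [Finset.sum_range_succ'
        (f := fun ℓ => hh (m+1-ℓ) ℓ y * ∏ j ∈ Finset.range ℓ, (x - (y-(j:ℝ))^2))]
      rw [Finset.sum_range_succ
        (f := fun ℓ => hh (m-ℓ) ℓ y * ∏ j ∈ Finset.range (ℓ+1), (x - (y-(j:ℝ))^2))]
      rw [Finset.sum_range_succ'
        (f := fun ℓ => (y-(ℓ:ℝ))^2 *
          (hh (m-ℓ) ℓ y * ∏ j ∈ Finset.range ℓ, (x - (y-(j:ℝ))^2)))]
      have hterm : ∀ ℓ ∈ Finset.range m,
          hh (m+1-(ℓ+1)) (ℓ+1) y * ∏ j ∈ Finset.range (ℓ+1), (x - (y-(j:ℝ))^2)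
            = hh (m-ℓ) ℓ y * ∏ j ∈ Finset.range (ℓ+1), (x - (y-(j:ℝ))^2)
              + (y-((ℓ+1:ℕ):ℝ))^2 *
                (hh (m-(ℓ+1)) (ℓ+1) y * ∏ j ∈ Finset.range (ℓ+1), (x - (y-(j:ℝ))^2)) := by
        intro ℓ hℓ
        rw [Finset.mem_range] at hℓ
        have e1 : m+1-(ℓ+1) = (m-ℓ-1)+1 := by omega
        have e2 : m-(ℓ+1) = m-ℓ-1 := by omega
        have e3 : m-ℓ = (m-ℓ-1)+1 := by omega
        rw [e1, e2, e3]
        have hr := hh_rec (m-ℓ-1) ℓ y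
        push_cast
        linear_combination (∏ j ∈ Finset.range (ℓ+1), (x - (y-(j:ℝ))^2)) * hr
      rw [Finset.sum_congr rfl hterm, Finset.sum_add_distrib]
      have hlast : hh (m+1-(m+1)) (m+1) y * ∏ j ∈ Finset.range (m+1), (x - (y-(j:ℝ))^2)
          = hh (m-m) m y * ∏ j ∈ Finset.range (m+1), (x - (y-(j:ℝ))^2) := by
        rw [show m+1-(m+1) = 0 from by omega, show m-m = 0 from by omega,
          hh_zero, hh_zero]
      have hzero : hh (m+1-0) 0 y * ∏ j ∈ Finset.range 0, (x - (y-(j:ℝ))^2)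
          = (y-((0:ℕ):ℝ))^2 *
            (hh (m-0) 0 y * ∏ j ∈ Finset.range 0, (x - (y-(j:ℝ))^2)) := by
        rw [show m+1-0 = m+1 from rfl, show m-0 = m from rfl, hh_d_zero, hh_d_zero]
        push_cast
        ring
      rw [hlast, hzero]
      ring

theorem C_odd_moment (m n : ℕ) (h : m + 1 < n) :
    ∑ k ∈ Finset.Icc 1 n,
        (-1 : ℝ) ^ (k - 1) * brkt (2 * n) (n - k) * (k : ℝ) ^ (1 + 2 * m) =
      (1 / 8) *
        ∑ ℓ ∈ Finset.range (m + 1),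
          (-1 : ℝ) ^ ℓ * ffact (2 * (n : ℝ) - 1 / 2) (2 * ℓ) *
            ((2 * (n : ℝ) - 2 * (ℓ : ℝ) - 1) / ((n : ℝ) - (ℓ : ℝ) - 1) *
                brkt (2 * n - 2 * ℓ) (n - ℓ) +
              (-1 : ℝ) ^ (n + ℓ) *
                ((1 + 2 * (n : ℝ)) * (1 + 2 * (ℓ : ℝ)) / ((n : ℝ) - (ℓ : ℝ) - 1)) *
                (brkt (2 * n - ℓ) ℓ)⁻¹) *
            csigma m ℓ ((n : ℝ) - 1 / 2) := by
  have step1 : (∑ k ∈ Finset.Icc 1 n,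
        (-1:ℝ)^(k-1) * brkt (2*n) (n-k) * (k:ℝ)^(1+2*m))
      = ∑ ℓ ∈ Finset.range (m+1), csigma m ℓ ((n:ℝ)-1/2) * Fs n ℓ n := by
    have h1 : ∀ k ∈ Finset.Icc 1 n,
        (-1:ℝ)^(k-1) * brkt (2*n) (n-k) * (k:ℝ)^(1+2*m)
          = ∑ ℓ ∈ Finset.range (m+1), csigma m ℓ ((n:ℝ)-1/2) *
              ((-1:ℝ)^(k-1) * B n k * (k:ℝ) * Pp n ℓ (k:ℝ)) := by
      intro k hk
      rw [Finset.mem_Icc] at hk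
      rw [← B_eq_brkt n k hk.2]
      have hpow : (k:ℝ)^(1+2*m) = (k:ℝ) * ((k:ℝ)^2)^m := by
        rw [pow_add, pow_mul, pow_one]
      rw [hpow, newton ((n:ℝ)-1/2) m ((k:ℝ)^2), Finset.mul_sum, Finset.mul_sum]
      apply Finset.sum_congr rfl
      intro ℓ _
      rw [csigma_eq_hh]
      simp only [Pp]
      ring
    rw [Finset.sum_congr rfl h1, Finset.sum_comm]
    apply Finset.sum_congr rfl
    intro ℓ _
    simp only [Fs]
    rw [Finset.mul_sum]
  have step2 : ∀ ℓ ∈ Finset.range (m+1),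
      csigma m ℓ ((n:ℝ)-1/2) * Fs n ℓ n
        = (1/8) * ((-1:ℝ)^ℓ * ffact (2*(n:ℝ) - 1/2) (2*ℓ) *
            ((2*(n:ℝ) - 2*(ℓ:ℝ) - 1) / ((n:ℝ) - (ℓ:ℝ) - 1) * brkt (2*n - 2*ℓ) (n-ℓ) +
              (-1:ℝ)^(n+ℓ) * ((1 + 2*(n:ℝ)) * (1 + 2*(ℓ:ℝ)) / ((n:ℝ) - (ℓ:ℝ) - 1)) *
                (brkt (2*n - ℓ) ℓ)⁻¹) *
            csigma m ℓ ((n:ℝ) - 1/2)) := by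
    intro ℓ hℓ
    rw [Finset.mem_range] at hℓ
    have hℓn : ℓ ≤ n := by omega
    have hN2 : 2 ≤ n - ℓ := by omega
    have e0 := Fs_eq n ℓ n hℓn
    have e1 := Fs_zero (n-ℓ) hN2 n
    have e2 := E2 n ℓ (by omega)
    have e3 := E1 (n-ℓ) hN2
    have hc2 : 2*(n-ℓ) = 2*n - 2*ℓ := by omega
    have hcc : ((n-ℓ:ℕ):ℝ) = (n:ℝ) - (ℓ:ℝ) := by rw [Nat.cast_sub hℓn]
    rw [hc2, hcc] at e3
    rw [e0, e1, e2, e3]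
    ring
  rw [step1, Finset.sum_congr rfl step2, ← Finset.mul_sum]
end

section
/- For every positive integer n, Σ_{k=1}^{n} C(2n, n−k) · k^4 = 2^(2n−3) · n · (3n − 1). -/
open Finset

lemma sum_choose_mul_choose (m s : ℕ) (h : s ≤ m) :
    ∑ j ∈ range (m+1), m.choose j * j.choose s = m.choose s * 2 ^ (m - s) := by
  rw [range_eq_Ico, ← Finset.sum_Ico_consecutive _ (Nat.zero_le s) (by omega : s ≤ m+1)]
  have h1 : ∑ j ∈ Ico 0 s, m.choose j * j.choose s = 0 := by
    apply Finset.sum_eq_zero; intro j hj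
    simp only [mem_Ico] at hj
    rw [Nat.choose_eq_zero_of_lt hj.2, Nat.mul_zero]
  rw [h1, zero_add, Finset.sum_Ico_eq_sum_range]
  have h2 : ∀ i ∈ range (m+1-s), m.choose (s+i) * (s+i).choose s
      = m.choose s * (m-s).choose i := by
    intro i hi
    simp only [mem_range] at hi
    have hk : s + i ≤ m := by omega
    have := Nat.choose_mul (n := m) (Nat.le_add_right s i)
    simpa [Nat.add_sub_cancel_left] using this
  rw [Finset.sum_congr rfl h2, ← Finset.mul_sum]
  congr 1
  have h3 : m + 1 - s = (m - s) + 1 := by omega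
  rw [h3, Nat.sum_range_choose]

lemma moment (m s : ℕ) (h : s ≤ m) :
    ∑ j ∈ range (m+1), (m.choose j : ℝ) * (j.descFactorial s : ℝ)
      = (m.descFactorial s : ℝ) * 2 ^ (m - s) := by
  have key : ∑ j ∈ range (m+1), m.choose j * j.descFactorial s
      = m.descFactorial s * 2 ^ (m - s) := by
    calc ∑ j ∈ range (m+1), m.choose j * j.descFactorial s
        = ∑ j ∈ range (m+1), Nat.factorial s * (m.choose j * j.choose s) := by
          apply Finset.sum_congr rfl; intro j _
          rw [Nat.descFactorial_eq_factorial_mul_choose]; ring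
      _ = Nat.factorial s * (m.choose s * 2 ^ (m - s)) := by
          rw [← Finset.mul_sum, sum_choose_mul_choose m s h]
      _ = m.descFactorial s * 2 ^ (m - s) := by
          rw [Nat.descFactorial_eq_factorial_mul_choose]; ring
  have := congrArg (fun x : ℕ => (x : ℝ)) key
  push_cast at this
  simpa using this

lemma expansion (j : ℕ) (x : ℝ) :
    ((j:ℝ) - x)^4 = (j.descFactorial 4 : ℝ) + (6 - 4*x) * (j.descFactorial 3 : ℝ)
      + (6*x^2 - 12*x + 7) * (j.descFactorial 2 : ℝ)
      + (1 - 4*x + 6*x^2 - 4*x^3) * (j.descFactorial 1 : ℝ) + x^4 := by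
  match j with
  | 0 => simp [Nat.descFactorial]; ring
  | 1 => simp [Nat.descFactorial]; ring
  | 2 => simp [Nat.descFactorial]; ring
  | (m+3) =>
    have e1 : m+3-1 = m+2 := by omega
    have e2 : m+3-2 = m+1 := by omega
    simp [Nat.descFactorial, e1, e2]
    ring

-- general symmetry step, for any n ≥ 1
lemma sym_step (n : ℕ) (hn : 0 < n) :
    ∑ j ∈ range (2*n+1), ((2*n).choose j : ℝ) * ((j:ℝ) - (n:ℝ))^4
      = (∑ k ∈ Finset.Icc 1 n, (((2 * n).choose (n - k) : ℝ)) * (k : ℝ) ^ 4)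
      + (∑ k ∈ Finset.Icc 1 n, (((2 * n).choose (n - k) : ℝ)) * (k : ℝ) ^ 4) := by
  set f : ℕ → ℝ := fun j => ((2*n).choose j : ℝ) * ((j:ℝ) - (n:ℝ))^4 with hf
  set g : ℕ → ℝ := fun i => ((2*n).choose (n-1-i) : ℝ) * ((i:ℝ)+1)^4 with hg
  have hS : ∑ k ∈ Finset.Icc 1 n, (((2 * n).choose (n - k) : ℝ)) * (k : ℝ) ^ 4
      = ∑ i ∈ range n, g i := by
    rw [← Finset.Ico_add_one_right_eq_Icc, Finset.sum_Ico_eq_sum_range]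
    have hr : n + 1 - 1 = n := rfl
    rw [hr]
    apply Finset.sum_congr rfl
    intro i _
    simp only [hg]
    have : n - (1 + i) = n - 1 - i := by omega
    rw [this]
    push_cast
    ring_nf
  have hlow : ∑ j ∈ range n, f j = ∑ i ∈ range n, g i := by
    rw [← Finset.sum_range_reflect g n]
    apply Finset.sum_congr rfl
    intro j hj
    simp only [mem_range] at hj
    simp only [hf, hg]
    have e1 : n - 1 - (n - 1 - j) = j := by omega
    rw [e1]
    congr 1
    have e2 : ((n - 1 - j : ℕ) : ℝ) = (n:ℝ) - 1 - (j:ℝ) := by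
      have : ((n - 1 - j : ℕ) : ℝ) = ((n:ℕ):ℝ) - 1 - (j:ℝ) := by
        rw [Nat.cast_sub (by omega), Nat.cast_sub (by omega)]; norm_num
      exact this
    rw [e2]; ring
  have hhigh : ∑ j ∈ Ico (n+1) (2*n+1), f j = ∑ i ∈ range n, g i := by
    rw [Finset.sum_Ico_eq_sum_range]
    have e : 2*n+1 - (n+1) = n := by omega
    rw [e]
    apply Finset.sum_congr rfl
    intro i hi
    simp only [mem_range] at hi
    simp only [hf, hg]
    have e1 : (2*n).choose (n+1+i) = (2*n).choose (n-1-i) := by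
      have h1 : n+1+i ≤ 2*n := by omega
      have := Nat.choose_symm h1
      have e2 : 2*n - (n+1+i) = n-1-i := by omega
      rw [e2] at this
      exact this.symm
    rw [e1]
    congr 1
    push_cast
    ring
  have hmid : f n = 0 := by simp [hf]
  have split : ∑ j ∈ range (2*n+1), f j
      = (∑ j ∈ range n, f j) + f n + ∑ j ∈ Ico (n+1) (2*n+1), f j := by
    rw [range_eq_Ico, ← Finset.sum_Ico_consecutive _ (Nat.zero_le n) (by omega : n ≤ 2*n+1),
      ← range_eq_Ico, Finset.sum_eq_sum_Ico_succ_bot (by omega : n < 2*n+1)]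
    ring
  rw [split, hmid, hlow, hhigh, hS]
  ring

theorem A_four_eval (n : ℕ) (hn : 0 < n) :
    ∑ k ∈ Finset.Icc 1 n, (((2 * n).choose (n - k) : ℝ)) * (k : ℝ) ^ 4 =
      (2 : ℝ) ^ (2 * (n : ℤ) - 3) * (n : ℝ) * (3 * (n : ℝ) - 1) := by
  rcases n with _ | _ | m
  · omega
  · -- n = 1
    rw [Finset.Icc_self, Finset.sum_singleton]
    norm_num
  · -- n = m + 2
    set n := m + 1 + 1 with hn2
    have h4 : 4 ≤ 2 * n := by omega
    have hT : ∑ j ∈ range (2*n+1), ((2*n).choose j : ℝ) * ((j:ℝ) - (n:ℝ))^4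
        = ((2*n).descFactorial 4 : ℝ) * 2^(2*n-4)
          + (6 - 4*(n:ℝ)) * (((2*n).descFactorial 3 : ℝ) * 2^(2*n-3))
          + (6*(n:ℝ)^2 - 12*(n:ℝ) + 7) * (((2*n).descFactorial 2 : ℝ) * 2^(2*n-2))
          + (1 - 4*(n:ℝ) + 6*(n:ℝ)^2 - 4*(n:ℝ)^3) * (((2*n).descFactorial 1 : ℝ) * 2^(2*n-1))
          + (n:ℝ)^4 * (((2*n).descFactorial 0 : ℝ) * 2^(2*n-0)) := by
      have e : ∀ j ∈ range (2*n+1),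
          ((2*n).choose j : ℝ) * ((j:ℝ) - (n:ℝ))^4
          = ((2*n).choose j : ℝ) * (j.descFactorial 4 : ℝ)
            + (6 - 4*(n:ℝ)) * (((2*n).choose j : ℝ) * (j.descFactorial 3 : ℝ))
            + (6*(n:ℝ)^2 - 12*(n:ℝ) + 7) * (((2*n).choose j : ℝ) * (j.descFactorial 2 : ℝ))
            + (1 - 4*(n:ℝ) + 6*(n:ℝ)^2 - 4*(n:ℝ)^3) * (((2*n).choose j : ℝ) * (j.descFactorial 1 : ℝ))
            + (n:ℝ)^4 * (((2*n).choose j : ℝ) * (j.descFactorial 0 : ℝ)) := by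
        intro j _
        rw [expansion j (n:ℝ)]
        simp only [Nat.descFactorial]
        push_cast
        ring
      rw [Finset.sum_congr rfl e]
      simp only [Finset.sum_add_distrib, ← Finset.mul_sum]
      rw [moment (2*n) 4 (by omega), moment (2*n) 3 (by omega), moment (2*n) 2 (by omega),
        moment (2*n) 1 (by omega), moment (2*n) 0 (by omega)]
    have hsym := sym_step n (by omega)
    rw [hT] at hsym
    -- now compute everything concretely
    have d1 : (2*n).descFactorial 1 = 2*n := by simp [Nat.descFactorial]
    have d2 : (2*n).descFactorial 2 = (2*n-1)*(2*n) := by simp [Nat.descFactorial]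
    have d3 : (2*n).descFactorial 3 = (2*n-2)*((2*n-1)*(2*n)) := by simp [Nat.descFactorial]
    have d4 : (2*n).descFactorial 4 = (2*n-3)*((2*n-2)*((2*n-1)*(2*n))) := by
      simp [Nat.descFactorial]
    have s1 : 2*n-1 = 2*m+3 := by omega
    have s2 : 2*n-2 = 2*m+2 := by omega
    have s3 : 2*n-3 = 2*m+1 := by omega
    have s4 : 2*n-4 = 2*m := by omega
    have s0 : 2*n-0 = 2*m+4 := by omega
    simp only [Nat.descFactorial_zero, Nat.cast_one, one_mul] at hsym
    rw [d1, d2, d3, d4, s1, s2, s3, s4, s0] at hsym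
    have hz : (2:ℝ) ^ (2 * ((n:ℕ) : ℤ) - 3) = (2:ℝ) ^ (2*m+1 : ℕ) := by
      rw [show 2 * ((n:ℕ) : ℤ) - 3 = ((2*m+1 : ℕ) : ℤ) by push_cast [hn2]; ring,
        zpow_natCast]
    rw [hz]
    push_cast [hn2] at hsym ⊢
    linear_combination -hsym / 2
end

section
/- For every positive integer n, Σ_{k=1}^{n} C(2n, n−k) · k^10 = 2^(2n−6) · n · (945n^4 − 3150n^3 + 4095n^2 − 2370n + 496). -/
open Finset

noncomputable def Bm (i n : ℕ) : ℝ :=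
  ∑ j ∈ Finset.range (2 * n + 1), ((2 * n).choose j : ℝ) * ((n : ℝ) - j) ^ i

lemma pascal_step (N : ℕ) (f : ℕ → ℝ) :
    ∑ j ∈ Finset.range (N + 2), ((N + 1).choose j : ℝ) * f j
      = ∑ j ∈ Finset.range (N + 1), (N.choose j : ℝ) * (f j + f (j + 1)) := by
  have h2 : ∑ k ∈ Finset.range (N + 1), (N.choose (k + 1) : ℝ) * f (k + 1)
      = ∑ j ∈ Finset.range (N + 1), (N.choose j : ℝ) * f j - (N.choose 0 : ℝ) * f 0 := by
    have h3 : ∑ j ∈ Finset.range (N + 2), (N.choose j : ℝ) * f j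
        = ∑ j ∈ Finset.range (N + 1), (N.choose j : ℝ) * f j := by
      rw [Finset.sum_range_succ]
      simp [Nat.choose_eq_zero_of_lt (Nat.lt_succ_self N)]
    have h4 := Finset.sum_range_succ' (fun j => (N.choose j : ℝ) * f j) (N + 1)
    rw [h3] at h4
    linarith [h4]
  rw [Finset.sum_range_succ' (fun j => ((N + 1).choose j : ℝ) * f j) (N + 1)]
  simp only [Nat.choose_succ_succ, Nat.cast_add, add_mul, mul_add,
    Finset.sum_add_distrib, h2]
  simp only [Nat.choose_zero_right, Nat.cast_one]
  ring

lemma Bm_succ (i n : ℕ) :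
    Bm i (n + 1) = ∑ j ∈ Finset.range (2 * n + 1), ((2 * n).choose j : ℝ) *
      (((n : ℝ) - j + 1) ^ i + 2 * ((n : ℝ) - j) ^ i + ((n : ℝ) - j - 1) ^ i) := by
  have h0 : Bm i (n + 1) = ∑ j ∈ Finset.range ((2 * n + 1) + 2),
      (((2 * n + 1) + 1).choose j : ℝ) * ((n : ℝ) + 1 - j) ^ i := by
    unfold Bm
    rw [show 2 * (n + 1) = 2 * n + 1 + 1 from by ring]
    apply Finset.sum_congr rfl
    intro j _
    push_cast
    ring
  rw [h0, pascal_step ((2 * n) + 1) (fun j => ((n : ℝ) + 1 - j) ^ i),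
    pascal_step (2 * n) (fun j => ((n : ℝ) + 1 - (j : ℕ)) ^ i + ((n : ℝ) + 1 - ((j : ℕ) + 1 : ℕ)) ^ i)]
  apply Finset.sum_congr rfl
  intro j _
  push_cast
  ring_nf

lemma rec0 (n : ℕ) : Bm 0 (n + 1) = 4 * Bm 0 n := by
  rw [Bm_succ]
  simp only [Bm, Finset.mul_sum]
  apply Finset.sum_congr rfl
  intro j _
  ring

lemma rec2 (n : ℕ) : Bm 2 (n + 1) = 4 * Bm 2 n + 2 * Bm 0 n := by
  rw [Bm_succ]
  simp only [Bm, Finset.mul_sum, ← Finset.sum_add_distrib]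
  apply Finset.sum_congr rfl
  intro j _
  ring

lemma rec4 (n : ℕ) : Bm 4 (n + 1) = 4 * Bm 4 n + 12 * Bm 2 n + 2 * Bm 0 n := by
  rw [Bm_succ]
  simp only [Bm, Finset.mul_sum, ← Finset.sum_add_distrib]
  apply Finset.sum_congr rfl
  intro j _
  ring

lemma rec6 (n : ℕ) :
    Bm 6 (n + 1) = 4 * Bm 6 n + 30 * Bm 4 n + 30 * Bm 2 n + 2 * Bm 0 n := by
  rw [Bm_succ]
  simp only [Bm, Finset.mul_sum, ← Finset.sum_add_distrib]
  apply Finset.sum_congr rfl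
  intro j _
  ring

lemma rec8 (n : ℕ) :
    Bm 8 (n + 1) = 4 * Bm 8 n + 56 * Bm 6 n + 140 * Bm 4 n + 56 * Bm 2 n + 2 * Bm 0 n := by
  rw [Bm_succ]
  simp only [Bm, Finset.mul_sum, ← Finset.sum_add_distrib]
  apply Finset.sum_congr rfl
  intro j _
  ring

lemma rec10 (n : ℕ) :
    Bm 10 (n + 1) = 4 * Bm 10 n + 90 * Bm 8 n + 420 * Bm 6 n + 420 * Bm 4 n
      + 90 * Bm 2 n + 2 * Bm 0 n := by
  rw [Bm_succ]
  simp only [Bm, Finset.mul_sum, ← Finset.sum_add_distrib]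
  apply Finset.sum_congr rfl
  intro j _
  ring

lemma Bm0_eval (n : ℕ) : Bm 0 n = 4 ^ n := by
  induction n with
  | zero => simp [Bm]
  | succ n ih => rw [rec0, ih]; ring

lemma Bm2_eval (n : ℕ) : Bm 2 n = (n : ℝ) / 2 * 4 ^ n := by
  induction n with
  | zero => simp [Bm]
  | succ n ih => rw [rec2, ih, Bm0_eval]; push_cast; ring

lemma Bm4_eval (n : ℕ) : Bm 4 n = (3 * (n : ℝ) ^ 2 - n) / 4 * 4 ^ n := by
  induction n with
  | zero => simp [Bm]
  | succ n ih => rw [rec4, ih, Bm2_eval, Bm0_eval]; push_cast; ring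

lemma Bm6_eval (n : ℕ) :
    Bm 6 n = (15 * (n : ℝ) ^ 3 - 15 * n ^ 2 + 4 * n) / 8 * 4 ^ n := by
  induction n with
  | zero => simp [Bm]
  | succ n ih => rw [rec6, ih, Bm4_eval, Bm2_eval, Bm0_eval]; push_cast; ring

lemma Bm8_eval (n : ℕ) :
    Bm 8 n = (105 * (n : ℝ) ^ 4 - 210 * n ^ 3 + 147 * n ^ 2 - 34 * n) / 16 * 4 ^ n := by
  induction n with
  | zero => simp [Bm]
  | succ n ih => rw [rec8, ih, Bm6_eval, Bm4_eval, Bm2_eval, Bm0_eval]; push_cast; ring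

lemma Bm10_eval (n : ℕ) :
    Bm 10 n = (n : ℝ) * (945 * (n : ℝ) ^ 4 - 3150 * n ^ 3 + 4095 * n ^ 2 - 2370 * n + 496)
      / 32 * 4 ^ n := by
  induction n with
  | zero => simp [Bm]
  | succ n ih =>
    rw [rec10, ih, Bm8_eval, Bm6_eval, Bm4_eval, Bm2_eval, Bm0_eval]; push_cast; ring

lemma Bm_symm (n : ℕ) :
    Bm 10 n = 2 * ∑ k ∈ Finset.Icc 1 n, (((2 * n).choose (n - k) : ℝ)) * (k : ℝ) ^ 10 := by
  have hIcc : ∑ k ∈ Finset.Icc 1 n, (((2 * n).choose (n - k) : ℝ)) * (k : ℝ) ^ 10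
      = ∑ k ∈ Finset.range n, ((2 * n).choose (n - (1 + k)) : ℝ) * ((1 + k : ℕ) : ℝ) ^ 10 := by
    rw [← Finset.Ico_add_one_right_eq_Icc, Finset.sum_Ico_eq_sum_range]
    simp
  have h1 : ∑ j ∈ Finset.range n, ((2 * n).choose j : ℝ) * ((n : ℝ) - j) ^ 10
      = ∑ k ∈ Finset.range n, ((2 * n).choose (n - (1 + k)) : ℝ) * ((1 + k : ℕ) : ℝ) ^ 10 := by
    rw [← Finset.sum_range_reflect (fun j => ((2 * n).choose j : ℝ) * ((n : ℝ) - j) ^ 10) n]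
    apply Finset.sum_congr rfl
    intro k hk
    rw [Finset.mem_range] at hk
    have c1 : ((n - 1 - k : ℕ) : ℝ) = (n : ℝ) - 1 - k := by
      rw [Nat.cast_sub (by omega), Nat.cast_sub (by omega)]
      push_cast
      ring
    simp only [c1]
    rw [show n - 1 - k = n - (1 + k) from by omega]
    congr 1
    push_cast
    ring
  have h2 : ∑ j ∈ Finset.range (n + 1), ((2 * n).choose (n + j) : ℝ) * ((n : ℝ) - (n + j : ℕ)) ^ 10
      = ∑ k ∈ Finset.range n, ((2 * n).choose (n - (1 + k)) : ℝ) * ((1 + k : ℕ) : ℝ) ^ 10 := by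
    rw [Finset.sum_range_succ'
      (fun j => ((2 * n).choose (n + j) : ℝ) * ((n : ℝ) - (n + j : ℕ)) ^ 10) n]
    have hz : ((2 * n).choose (n + 0) : ℝ) * ((n : ℝ) - (n + 0 : ℕ)) ^ 10 = 0 := by
      push_cast
      ring_nf
    rw [hz, add_zero]
    apply Finset.sum_congr rfl
    intro k hk
    rw [Finset.mem_range] at hk
    have hc : (2 * n).choose (n + (k + 1)) = (2 * n).choose (n - (1 + k)) := by
      rw [← Nat.choose_symm (by omega : n + (k + 1) ≤ 2 * n)]
      congr 1
      omega
    rw [hc]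
    congr 1
    push_cast
    ring
  have hsplit : Bm 10 n
      = ∑ j ∈ Finset.range n, ((2 * n).choose j : ℝ) * ((n : ℝ) - j) ^ 10
        + ∑ j ∈ Finset.range (n + 1),
            ((2 * n).choose (n + j) : ℝ) * ((n : ℝ) - (n + j : ℕ)) ^ 10 := by
    unfold Bm
    rw [show 2 * n + 1 = n + (n + 1) from by ring]
    rw [Finset.sum_range_add (fun j => ((2 * n).choose j : ℝ) * ((n : ℝ) - j) ^ 10) n (n + 1)]
  rw [hsplit, h1, h2, hIcc]
  ring

theorem A_ten_eval (n : ℕ) (hn : 0 < n) :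
    ∑ k ∈ Finset.Icc 1 n, (((2 * n).choose (n - k) : ℝ)) * (k : ℝ) ^ 10 =
      (2 : ℝ) ^ (2 * (n : ℤ) - 6) * (n : ℝ) *
        (945 * (n : ℝ) ^ 4 - 3150 * (n : ℝ) ^ 3 + 4095 * (n : ℝ) ^ 2 - 2370 * (n : ℝ) + 496) := by
  have h := Bm_symm n
  rw [Bm10_eval] at h
  have h64 : (2 : ℝ) ^ (2 * (n : ℤ) - 6) = 4 ^ n / 64 := by
    rw [show 2 * (n : ℤ) - 6 = ((2 * n : ℕ) : ℤ) - 6 from by push_cast; ring,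
      zpow_sub₀ (by norm_num : (2 : ℝ) ≠ 0), zpow_natCast, pow_mul]
    norm_num
  rw [h64]
  linarith [h]
end

section
/- For every positive integer n, Σ_{k=1}^{n} C(2n, n−k) · k^9 = (n^2 / 2) · C(2n, n) · (24n^3 − 60n^2 + 54n − 17). -/
open Finset

noncomputable def Qpoly (n k : ℝ) : ℝ :=
  (12*n^5 - 30*n^4 + 27*n^3 - 17/2*n^2)
  + (12*n^4 - 36*n^3 + 44*n^2 - 27*n + 17/2)*k^2
  + (6*n^3 - 19*n^2 + 24*n - 14)*k^4
  + (2*n^2 - 6*n + 7)*k^6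
  + (n/2 - 2)*k^8 + k^9/2

noncomputable def Ftel (n k : ℕ) : ℝ :=
  if k ≤ n then Qpoly n k * ((2*n).choose (n - k) : ℝ) else 0

lemma choose_step (n k : ℕ) (hk : k < n) :
    ((2*n).choose (n - k) : ℝ) * ((n : ℝ) - k) =
      ((2*n).choose (n - k - 1) : ℝ) * ((n : ℝ) + k + 1) := by
  have h := Nat.choose_succ_right_eq (2*n) (n - k - 1)
  have h1 : n - k - 1 + 1 = n - k := by omega
  have h2 : 2*n - (n - k - 1) = n + k + 1 := by omega
  rw [h1, h2] at h
  have := congrArg (fun x : ℕ => (x : ℝ)) h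
  push_cast at this
  have hnk : ((n - k : ℕ) : ℝ) = (n : ℝ) - k := by
    push_cast [Nat.cast_sub hk.le]; ring
  rw [hnk] at this
  linarith [this]

lemma step_eq (n k : ℕ) (h1 : 1 ≤ k) (h2 : k ≤ n) :
    ((2*n).choose (n - k) : ℝ) * (k : ℝ) ^ 9 = Ftel n k - Ftel n (k+1) := by
  rcases eq_or_lt_of_le h2 with rfl | hlt
  · simp only [Ftel, if_pos le_rfl, if_neg (by omega : ¬ k + 1 ≤ k),
      Nat.sub_self, Nat.choose_zero_right]
    push_cast
    unfold Qpoly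
    ring
  · have hc := choose_step n k hlt
    have hne : (n : ℝ) + k + 1 ≠ 0 := by positivity
    have hC1 : ((2*n).choose (n - k - 1) : ℝ) =
        ((2*n).choose (n - k) : ℝ) * ((n : ℝ) - k) / ((n : ℝ) + k + 1) := by
      field_simp
      linarith [hc]
    have hidx : n - (k+1) = n - k - 1 := by omega
    simp only [Ftel, if_pos h2, if_pos (by omega : k + 1 ≤ n), hidx, hC1]
    push_cast
    field_simp
    unfold Qpoly
    ring

theorem A_nine_eval (n : ℕ) (hn : 0 < n) :
    ∑ k ∈ Finset.Icc 1 n, (((2 * n).choose (n - k) : ℝ)) * (k : ℝ) ^ 9 =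
      ((n : ℝ) ^ 2 / 2) * (((2 * n).choose n : ℝ)) *
        (24 * (n : ℝ) ^ 3 - 60 * (n : ℝ) ^ 2 + 54 * (n : ℝ) - 17) := by
  have hsum : ∑ k ∈ Finset.Icc 1 n, (((2 * n).choose (n - k) : ℝ)) * (k : ℝ) ^ 9
      = ∑ i ∈ Finset.range n, (Ftel n (i+1) - Ftel n (i+1+1)) := by
    rw [← Finset.Ico_add_one_right_eq_Icc, Finset.sum_Ico_eq_sum_range]
    apply Finset.sum_congr rfl
    intro i hi
    rw [Finset.mem_range] at hi
    have := step_eq n (1+i) (by omega) (by omega)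
    rw [this]
    congr 2 <;> omega
  rw [hsum, Finset.sum_range_sub' (fun i => Ftel n (i+1))]
  simp only [Ftel, if_pos (by omega : 1 ≤ n), if_neg (by omega : ¬ n + 1 ≤ n), sub_zero]
  -- now : Qpoly n 1 * choose(2n, n-1) = RHS
  have h := Nat.choose_succ_right_eq (2*n) (n - 1)
  have h1 : n - 1 + 1 = n := by omega
  have h2 : 2*n - (n-1) = n + 1 := by omega
  rw [h1, h2] at h
  have hc : ((2*n).choose n : ℝ) * ((n : ℝ)) = ((2*n).choose (n-1) : ℝ) * ((n : ℝ) + 1) := by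
    have := congrArg (fun x : ℕ => (x : ℝ)) h
    push_cast at this
    linarith [this]
  have hne : (n : ℝ) + 1 ≠ 0 := by positivity
  have hC : ((2*n).choose (n-1) : ℝ) = ((2*n).choose n : ℝ) * (n : ℝ) / ((n : ℝ) + 1) := by
    field_simp
    linarith [hc]
  rw [hC]
  field_simp
  unfold Qpoly
  ring
end

section
/- For every integer n ≥ 5, Σ_{k=1}^{n} (−1)^(k−1) · C(2n, n−k) · k^9 = C(2n, n) · n^2 · (496n^3 − 672n^2 + 344n − 63) / (2(2n−1)(2n−3)(2n−5)(2n−7)(2n−9)). -/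
open Finset

noncomputable def Bd (n : ℝ) : ℝ :=
  2 * (2 * n - 1) * (2 * n - 3) * (2 * n - 5) * (2 * n - 7) * (2 * n - 9)

noncomputable def Bp (n k : ℝ) : ℝ :=
  (63 * n^2 - 344 * n^3 + 672 * n^4 - 496 * n^5)
  + (-63 + 344 * n - 1092 * n^2 + 2632 * n^3 - 3816 * n^4 + 2448 * n^5) * k^2
  + (420 - 2136 * n + 4698 * n^2 - 6312 * n^3 + 5208 * n^4 - 2016 * n^5) * k^4
  + (-882 + 3864 * n - 6468 * n^2 + 5880 * n^3 - 3024 * n^4 + 672 * n^5) * k^6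
  + (1260 - 4809 * n + 6192 * n^2 - 3768 * n^3 + 1152 * n^4 - 144 * n^5) * k^8
  + (-945 + 3378 * n - 3800 * n^2 + 1840 * n^3 - 400 * n^4 + 32 * n^5) * k^9
  + (210 - 704 * n + 688 * n^2 - 256 * n^3 + 32 * n^4) * k^10

lemma Bp_rec (n k : ℝ) :
    (n + k + 1) * (k^9 * Bd n - Bp n k) = (n - k) * Bp n (k + 1) := by
  simp only [Bp, Bd]; ring

lemma Bp_diag (n : ℝ) : Bp n n = n^9 * Bd n := by
  simp only [Bp, Bd]; ring

lemma Bp_one (n : ℝ) :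
    Bp n 1 = n * (n + 1) * (496 * n^3 - 672 * n^2 + 344 * n - 63) := by
  simp only [Bp]; ring

lemma choose_ratio (n : ℕ) (hn : 5 ≤ n) (j : ℕ) (hj : j + 1 ≤ n) :
    ((2 * n).choose (j + 1) : ℝ) * (j + 1) = ((2 * n).choose j : ℝ) * (2 * n - j) := by
  have h := Nat.choose_succ_right_eq (2 * n) j
  have hj2 : j ≤ 2 * n := by omega
  have h' := congrArg (fun x : ℕ => (x : ℝ)) h
  push_cast [Nat.cast_sub hj2] at h'
  linarith [h']

lemma B_key (n : ℕ) (hn : 5 ≤ n) : ∀ m, m ≤ n - 1 →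
    Bd n * ∑ k ∈ Finset.Icc 1 m,
        (-1 : ℝ) ^ (k - 1) * (((2 * n).choose (n - k) : ℝ)) * (k : ℝ) ^ 9
      = ((2 * n).choose (n - 1) : ℝ) * Bp n 1
        - (-1 : ℝ) ^ m * ((2 * n).choose (n - (m + 1)) : ℝ) * Bp n ((m : ℝ) + 1) := by
  intro m
  induction m with
  | zero => simp
  | succ m ih =>
    intro hm
    have hm' : m ≤ n - 1 := by omega
    have IH := ih hm'
    rw [Finset.sum_Icc_succ_top (by omega : 1 ≤ m + 1), mul_add, IH]
    -- the new summand
    have hk1 : (m + 1) - 1 = m := by omega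
    rw [hk1]
    -- choose relation: c1 := choose (n - (m+1)), c2 := choose (n - (m+2))
    set c1 : ℝ := ((2 * n).choose (n - (m + 1)) : ℝ) with hc1
    set c2 : ℝ := ((2 * n).choose (n - (m + 2)) : ℝ) with hc2
    have hrel : c1 * ((n : ℝ) - (m + 1)) = c2 * ((n : ℝ) + (m + 2)) := by
      have hj : (n - (m + 2)) + 1 ≤ n := by omega
      have h := choose_ratio n hn (n - (m + 2)) hj
      have e1 : n - (m + 2) + 1 = n - (m + 1) := by omega
      have e2 : ((n - (m + 2) : ℕ) : ℝ) = (n : ℝ) - (m + 2) := by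
        have : m + 2 ≤ n := by omega
        push_cast [Nat.cast_sub this]; ring
      rw [e1] at h
      rw [hc1, hc2]
      rw [e2] at h
      linarith [h]
    have hpoly := Bp_rec (n : ℝ) ((m : ℝ) + 1)
    have hstep : c1 * (((m : ℝ) + 1)^9 * Bd n - Bp n ((m : ℝ) + 1))
        = c2 * Bp n ((m : ℝ) + 2) := by
      have hne : (n : ℝ) + (m + 2) ≠ 0 := by positivity
      apply mul_left_cancel₀ hne
      have e : ((m : ℝ) + 1) + 1 = (m : ℝ) + 2 := by ring
      rw [e] at hpoly
      linear_combination c1 * hpoly + Bp (n : ℝ) ((m : ℝ) + 2) * hrel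
    have ecast : ((m : ℝ) + 1 + 1) = ((m : ℝ) + 2) := by ring
    have ecast2 : (((m + 1 : ℕ) : ℝ)) = (m : ℝ) + 1 := by push_cast; ring
    rw [ecast2, ecast, pow_succ]
    linear_combination ((-1 : ℝ) ^ m) * hstep

theorem B_nine_eval (n : ℕ) (hn : 5 ≤ n) :
    ∑ k ∈ Finset.Icc 1 n,
        (-1 : ℝ) ^ (k - 1) * (((2 * n).choose (n - k) : ℝ)) * (k : ℝ) ^ 9 =
      (((2 * n).choose n : ℝ)) * (n : ℝ) ^ 2 *
          (496 * (n : ℝ) ^ 3 - 672 * (n : ℝ) ^ 2 + 344 * (n : ℝ) - 63) /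
        (2 * (2 * (n : ℝ) - 1) * (2 * (n : ℝ) - 3) * (2 * (n : ℝ) - 5) *
          (2 * (n : ℝ) - 7) * (2 * (n : ℝ) - 9)) := by
  have hn5 : (5 : ℝ) ≤ (n : ℝ) := by exact_mod_cast hn
  have hD : Bd (n : ℝ) ≠ 0 := by
    simp only [Bd]
    have h1 : (0:ℝ) < 2 * (n:ℝ) - 1 := by linarith
    have h2 : (0:ℝ) < 2 * (n:ℝ) - 3 := by linarith
    have h3 : (0:ℝ) < 2 * (n:ℝ) - 5 := by linarith
    have h4 : (0:ℝ) < 2 * (n:ℝ) - 7 := by linarith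
    have h5 : (0:ℝ) < 2 * (n:ℝ) - 9 := by linarith
    exact ne_of_gt (mul_pos (mul_pos (mul_pos (mul_pos (mul_pos two_pos h1) h2) h3) h4) h5)
  -- split off the top term
  have hsplit : n = (n - 1) + 1 := by omega
  have key := B_key n hn (n - 1) le_rfl
  have hsum : ∑ k ∈ Finset.Icc 1 n,
        (-1 : ℝ) ^ (k - 1) * (((2 * n).choose (n - k) : ℝ)) * (k : ℝ) ^ 9
      = (∑ k ∈ Finset.Icc 1 (n - 1),
          (-1 : ℝ) ^ (k - 1) * (((2 * n).choose (n - k) : ℝ)) * (k : ℝ) ^ 9)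
        + (-1 : ℝ) ^ (n - 1) * (((2 * n).choose (n - n) : ℝ)) * (n : ℝ) ^ 9 := by
    rw [show Finset.Icc 1 n = Finset.Icc 1 ((n - 1) + 1) from by rw [← hsplit]]
    rw [Finset.sum_Icc_succ_top (by omega : 1 ≤ (n - 1) + 1)]
    rw [show (n - 1) + 1 = n from by omega]
  -- simplify key at m = n - 1
  have e3 : n - ((n - 1) + 1) = 0 := by omega
  have e4 : (((n - 1 : ℕ) : ℝ)) + 1 = (n : ℝ) := by
    have : 1 ≤ n := by omega
    push_cast [Nat.cast_sub this]; ring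
  rw [e3, e4] at key
  simp only [Nat.choose_zero_right, Nat.cast_one, mul_one] at key
  have hnn : n - n = 0 := by omega
  rw [hnn] at hsum
  simp only [Nat.choose_zero_right, Nat.cast_one, mul_one] at hsum
  have hdiag := Bp_diag (n : ℝ)
  -- D * total = choose(2n, n-1) * Bp n 1
  have htot : Bd (n : ℝ) * ∑ k ∈ Finset.Icc 1 n,
        (-1 : ℝ) ^ (k - 1) * (((2 * n).choose (n - k) : ℝ)) * (k : ℝ) ^ 9
      = ((2 * n).choose (n - 1) : ℝ) * Bp n 1 := by
    rw [hsum, mul_add, key]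
    rw [hdiag]
    ring
  -- relate choose(2n, n-1) to choose(2n, n)
  have hc : ((2 * n).choose n : ℝ) * (n : ℝ)
      = ((2 * n).choose (n - 1) : ℝ) * ((n : ℝ) + 1) := by
    have hj : (n - 1) + 1 ≤ n := by omega
    have h := choose_ratio n hn (n - 1) hj
    have e1 : (n - 1) + 1 = n := by omega
    have e2 : ((n - 1 : ℕ) : ℝ) = (n : ℝ) - 1 := by
      have : 1 ≤ n := by omega
      push_cast [Nat.cast_sub this]; ring
    rw [e1, e2] at h
    linarith [h]
  have hone := Bp_one (n : ℝ)
  -- finish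
  have hDpos : Bd (n : ℝ) = 2 * (2 * (n:ℝ) - 1) * (2 * (n:ℝ) - 3) * (2 * (n:ℝ) - 5) *
      (2 * (n:ℝ) - 7) * (2 * (n:ℝ) - 9) := rfl
  rw [eq_div_iff (by rw [← hDpos]; exact hD)]
  rw [← hDpos]
  linear_combination htot + ((2 * n).choose (n - 1) : ℝ) * hone
    - ((n : ℝ) * (496 * (n : ℝ) ^ 3 - 672 * (n : ℝ) ^ 2 + 344 * (n : ℝ) - 63)) * hc
end
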